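/- arXiv:1503.01341 — 7 statements merged into one kernel-verified Lean document; each statement's English description precedes it below -/
import Mathlib

section
/- Let H be a complex Hilbert space whose inner product ⟨·,·⟩ is conjugate-linear in the first variable, let α ∈ (0,1], and let E : 𝕋 → H be a map which is α-Hölderian with constant C (i.e. ‖E(e^{iθ}) − E(e^{iθ'})‖ ≤ C·|θ − θ'|^α for all θ, θ' ∈ [0,2π)) and bounded, with B := sup_{λ∈𝕋} ‖E(λ)‖ < ∞. Then for every x, y ∈ H and every integer n ≥ 1, |∫_𝕋 λ^n · ⟨x, E(λ)⟩ · conj(⟨y, E(λ)⟩) dμ(λ)| ≤ B·C·π^α·‖x‖·‖y‖ / n^α. -/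
open MeasureTheory
open scoped Real

/-- Proposition 2.9: speed of mixing `n^{-α}` for bounded linear functionals, for an
`α`-Hölderian bounded `𝕋`-eigenvector field `E`. The circle `𝕋` is parametrized by
`θ ↦ exp(iθ)`, `θ ∈ [0, 2π)`, and `μ` is the normalized Lebesgue measure `dθ/(2π)`. -/
theorem stmt0 {H : Type*} [NormedAddCommGroup H] [InnerProductSpace ℂ H]
    (α : ℝ) (hα : α ∈ Set.Ioc (0 : ℝ) 1) (E : ℂ → H) (C B : ℝ)
    (hHol : ∀ θ θ' : ℝ, θ ∈ Set.Ico (0 : ℝ) (2 * π) → θ' ∈ Set.Ico (0 : ℝ) (2 * π) →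
      ‖E (Complex.exp (θ * Complex.I)) - E (Complex.exp (θ' * Complex.I))‖ ≤ C * |θ - θ'| ^ α)
    (hB : ∀ z : ℂ, ‖z‖ = 1 → ‖E z‖ ≤ B)
    (x y : H) (n : ℕ) (hn : 1 ≤ n) :
    ‖(((2 * π : ℝ)) : ℂ)⁻¹ * ∫ θ in (0 : ℝ)..(2 * π),
        (Complex.exp (θ * Complex.I)) ^ n
          * (inner ℂ x (E (Complex.exp (θ * Complex.I))) : ℂ)
          * (starRingEnd ℂ) (inner ℂ y (E (Complex.exp (θ * Complex.I))) : ℂ)‖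
      ≤ B * C * π ^ α * ‖x‖ * ‖y‖ / (n : ℝ) ^ α := by
  obtain ⟨hα0, hα1⟩ := hα
  have hπ : (0:ℝ) < π := Real.pi_pos
  have hn0 : (0:ℝ) < n := by exact_mod_cast hn
  set δ : ℝ := π / n with hδdef
  have hδ0 : 0 < δ := div_pos hπ hn0
  have hnne : (n:ℝ) ≠ 0 := hn0.ne'
  have hnδ : (n:ℝ) * δ = π := by rw [hδdef]; field_simp
  -- norm of exp(θ I)
  have hnorme : ∀ θ : ℝ, ‖Complex.exp ((θ:ℂ) * Complex.I)‖ = 1 := by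
    intro θ
    exact Complex.norm_exp_ofReal_mul_I θ
  have hφB : ∀ θ : ℝ, ‖E (Complex.exp ((θ:ℂ) * Complex.I))‖ ≤ B := by
    intro θ
    exact hB _ (Complex.norm_exp_ofReal_mul_I θ)
  have hB0 : 0 ≤ B := le_trans (norm_nonneg _) (hφB 0)
  have h1mem : (1:ℝ) ∈ Set.Ico (0:ℝ) (2*π) := ⟨zero_le_one, by nlinarith [Real.pi_gt_three]⟩
  have h0mem : (0:ℝ) ∈ Set.Ico (0:ℝ) (2*π) := ⟨le_refl _, by nlinarith⟩
  have hC0 : 0 ≤ C := by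
    have := hHol 0 1 h0mem h1mem
    have h2 : |(0:ℝ) - 1| ^ α = 1 := by norm_num
    rw [h2, mul_one] at this
    exact le_trans (norm_nonneg _) this
  -- continuity of the eigenvector field along the parametrization
  have hφcont : ContinuousOn (fun θ : ℝ => E (Complex.exp ((θ:ℂ) * Complex.I)))
      (Set.Ico 0 (2*π)) := by
    rw [Metric.continuousOn_iff]
    intro θ₀ hθ₀ ε hε
    refine ⟨(ε/(C+1)) ^ (α⁻¹ : ℝ), Real.rpow_pos_of_pos (div_pos hε (by linarith)) _, ?_⟩
    intro θ hθ hdist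
    have h1 := hHol θ θ₀ hθ hθ₀
    have h2 : |θ - θ₀| ^ α ≤ ((ε/(C+1)) ^ (α⁻¹ : ℝ)) ^ α := by
      apply Real.rpow_le_rpow (abs_nonneg _) _ hα0.le
      rw [Real.dist_eq] at hdist
      exact hdist.le
    have h3 : ((ε/(C+1)) ^ (α⁻¹ : ℝ)) ^ α = ε/(C+1) := by
      rw [← Real.rpow_mul (div_nonneg hε.le (by linarith)), inv_mul_cancel₀ hα0.ne',
        Real.rpow_one]
    rw [h3] at h2
    have h4 : C * |θ - θ₀| ^ α ≤ C * (ε/(C+1)) := mul_le_mul_of_nonneg_left h2 hC0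
    have h5 : C * (ε/(C+1)) < ε := by
      rw [mul_div_assoc']
      rw [div_lt_iff₀ (by linarith)]
      nlinarith
    calc dist (E (Complex.exp ((θ:ℂ) * Complex.I))) (E (Complex.exp ((θ₀:ℂ) * Complex.I)))
        = ‖E (Complex.exp ((θ:ℂ) * Complex.I)) - E (Complex.exp ((θ₀:ℂ) * Complex.I))‖ :=
          dist_eq_norm _ _
      _ ≤ C * |θ - θ₀| ^ α := h1
      _ ≤ C * (ε/(C+1)) := h4
      _ < ε := h5
  set G : ℝ → ℂ := fun θ =>
    (inner ℂ x (E (Complex.exp ((θ:ℂ) * Complex.I))) : ℂ) *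
      (starRingEnd ℂ) (inner ℂ y (E (Complex.exp ((θ:ℂ) * Complex.I))) : ℂ) with hGdef
  set F : ℝ → ℂ := fun θ =>
    (Complex.exp ((θ:ℂ) * Complex.I)) ^ n *
      (inner ℂ x (E (Complex.exp ((θ:ℂ) * Complex.I))) : ℂ) *
      (starRingEnd ℂ) (inner ℂ y (E (Complex.exp ((θ:ℂ) * Complex.I))) : ℂ) with hFdef
  set K : ℝ := 2 * (B * C * ‖x‖ * ‖y‖) with hKdef
  -- Hölder-type estimate on G
  have hGdiff : ∀ θ θ' : ℝ, θ ∈ Set.Ico 0 (2*π) → θ' ∈ Set.Ico 0 (2*π) →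
      ‖G θ - G θ'‖ ≤ K * |θ - θ'| ^ α := by
    intro θ θ' h1 h2
    have hEd := hHol θ θ' h1 h2
    set u := E (Complex.exp ((θ:ℂ) * Complex.I)) with hu
    set v := E (Complex.exp ((θ':ℂ) * Complex.I)) with hv
    have hg : ‖(inner ℂ x u : ℂ) - (inner ℂ x v : ℂ)‖ ≤ ‖x‖ * (C * |θ - θ'| ^ α) := by
      rw [← inner_sub_right]
      exact (norm_inner_le_norm _ _).trans (mul_le_mul_of_nonneg_left hEd (norm_nonneg x))
    have hh : ‖(inner ℂ y u : ℂ) - (inner ℂ y v : ℂ)‖ ≤ ‖y‖ * (C * |θ - θ'| ^ α) := by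
      rw [← inner_sub_right]
      exact (norm_inner_le_norm _ _).trans (mul_le_mul_of_nonneg_left hEd (norm_nonneg y))
    have hga : ‖(inner ℂ x v : ℂ)‖ ≤ ‖x‖ * B :=
      (norm_inner_le_norm _ _).trans (mul_le_mul_of_nonneg_left (hφB θ') (norm_nonneg x))
    have hhb : ‖(inner ℂ y u : ℂ)‖ ≤ ‖y‖ * B :=
      (norm_inner_le_norm _ _).trans (mul_le_mul_of_nonneg_left (hφB θ) (norm_nonneg y))
    have hid : G θ - G θ' =
        ((inner ℂ x u : ℂ) - (inner ℂ x v : ℂ)) * (starRingEnd ℂ) (inner ℂ y u : ℂ) +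
          (inner ℂ x v : ℂ) *
            ((starRingEnd ℂ) (inner ℂ y u : ℂ) - (starRingEnd ℂ) (inner ℂ y v : ℂ)) := by
      simp only [hGdef]
      ring
    have hconj : ‖(starRingEnd ℂ) (inner ℂ y u : ℂ) - (starRingEnd ℂ) (inner ℂ y v : ℂ)‖
        = ‖(inner ℂ y u : ℂ) - (inner ℂ y v : ℂ)‖ := by
      rw [← map_sub, RCLike.norm_conj]
    have hconj2 : ‖(starRingEnd ℂ) (inner ℂ y u : ℂ)‖ = ‖(inner ℂ y u : ℂ)‖ := RCLike.norm_conj _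
    have habsnn : (0:ℝ) ≤ |θ - θ'| ^ α := Real.rpow_nonneg (abs_nonneg _) α
    calc ‖G θ - G θ'‖
        ≤ ‖(inner ℂ x u : ℂ) - (inner ℂ x v : ℂ)‖ * ‖(starRingEnd ℂ) (inner ℂ y u : ℂ)‖ +
            ‖(inner ℂ x v : ℂ)‖ *
              ‖(starRingEnd ℂ) (inner ℂ y u : ℂ) - (starRingEnd ℂ) (inner ℂ y v : ℂ)‖ := by
          rw [hid]
          exact (norm_add_le _ _).trans (by rw [norm_mul, norm_mul])
      _ ≤ (‖x‖ * (C * |θ - θ'| ^ α)) * (‖y‖ * B) + (‖x‖ * B) * (‖y‖ * (C * |θ - θ'| ^ α)) := by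
          rw [hconj, hconj2]
          exact add_le_add (mul_le_mul hg hhb (norm_nonneg _) (by positivity))
            (mul_le_mul hga hh (norm_nonneg _) (by positivity))
      _ = K * |θ - θ'| ^ α := by rw [hKdef]; ring
  -- continuity and integrability of F
  have hFcont : ContinuousOn F (Set.Ico 0 (2*π)) := by
    apply ContinuousOn.mul
    apply ContinuousOn.mul
    · exact (Continuous.continuousOn (by fun_prop))
    · exact ContinuousOn.inner continuousOn_const hφcont
    · exact ContinuousOn.star (ContinuousOn.inner continuousOn_const hφcont)
  have hFbd : ∀ θ : ℝ, ‖F θ‖ ≤ ‖x‖ * B * (‖y‖ * B) := by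
    intro θ
    simp only [hFdef]
    rw [norm_mul, norm_mul, norm_pow, hnorme θ, one_pow, one_mul, RCLike.norm_conj]
    have h1 : ‖(inner ℂ x (E (Complex.exp ((θ:ℂ) * Complex.I))) : ℂ)‖ ≤ ‖x‖ * B :=
      (norm_inner_le_norm _ _).trans (mul_le_mul_of_nonneg_left (hφB θ) (norm_nonneg x))
    have h2 : ‖(inner ℂ y (E (Complex.exp ((θ:ℂ) * Complex.I))) : ℂ)‖ ≤ ‖y‖ * B :=
      (norm_inner_le_norm _ _).trans (mul_le_mul_of_nonneg_left (hφB θ) (norm_nonneg y))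
    exact mul_le_mul h1 h2 (norm_nonneg _) (by positivity)
  have hFint : IntegrableOn F (Set.Ico 0 (2*π)) := by
    have hmeas : AEStronglyMeasurable F (volume.restrict (Set.Ico 0 (2*π))) :=
      hFcont.aestronglyMeasurable measurableSet_Ico
    have hfin : IsFiniteMeasure (volume.restrict (Set.Ico (0:ℝ) (2*π))) := by
      constructor
      rw [Measure.restrict_apply_univ, Real.volume_Ico]
      exact ENNReal.ofReal_lt_top
    exact ⟨hmeas, HasFiniteIntegral.of_bounded (C := ‖x‖ * B * (‖y‖ * B))
      (Filter.Eventually.of_forall hFbd)⟩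
  have hsub : ∀ a b : ℝ, 0 ≤ a → a ≤ b → b ≤ 2*π → IntervalIntegrable F volume a b := by
    intro a b ha hab hb
    rw [intervalIntegrable_iff_integrableOn_Ico_of_le hab]
    exact hFint.mono_set (Set.Ico_subset_Ico ha hb)
  -- the per-interval estimate
  have key : ∀ j : ℕ, j < n →
      ‖∫ θ in ((j:ℝ)*(2*δ))..(((j:ℕ)+1:ℕ):ℝ)*(2*δ), F θ‖ ≤ K * δ ^ α * δ := by
    intro j hj
    have hj1 : (j:ℝ) + 1 ≤ n := by exact_mod_cast Nat.succ_le_of_lt hj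
    set a : ℝ := (j:ℝ)*(2*δ) with hadef
    have hcast : ((((j:ℕ)+1:ℕ)):ℝ)*(2*δ) = a + 2*δ := by push_cast [hadef]; ring
    rw [hcast]
    have ha0 : 0 ≤ a := by positivity
    have hub : a + 2*δ ≤ 2*π := by
      have h1 : ((j:ℝ)+1)*(2*δ) ≤ (n:ℝ)*(2*δ) := by nlinarith
      nlinarith
    have hI1 : IntervalIntegrable F volume a (a+δ) :=
      hsub a (a+δ) ha0 (by linarith) (by linarith)
    have hI2 : IntervalIntegrable F volume (a+δ) (a+2*δ) :=
      hsub (a+δ) (a+2*δ) (by linarith) (by linarith) hub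
    have hIshift : IntervalIntegrable (fun θ => F (θ + δ)) volume a (a+δ) := by
      have := hI2.comp_add_right δ
      have he1 : a + δ - δ = a := by ring
      have he2 : a + 2*δ - δ = a + δ := by ring
      rwa [he1, he2] at this
    have e1 : ∫ θ in a..(a+2*δ), F θ = (∫ θ in a..a+δ, F θ) + ∫ θ in a+δ..a+2*δ, F θ :=
      (intervalIntegral.integral_add_adjacent_intervals hI1 hI2).symm
    have e2 : ∫ θ in a+δ..a+2*δ, F θ = ∫ θ in a..a+δ, F (θ + δ) := by
      rw [intervalIntegral.integral_comp_add_right]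
      congr 1 <;> ring
    have e3 : (∫ θ in a..a+δ, F θ) + ∫ θ in a..a+δ, F (θ + δ)
        = ∫ θ in a..a+δ, (F θ + F (θ + δ)) := (intervalIntegral.integral_add hI1 hIshift).symm
    rw [e1, e2, e3]
    have hne : ∀ᵐ θ : ℝ, θ ≠ 2*π - δ := by
      refine (MeasureTheory.ae_iff).2 ?_
      have : {θ : ℝ | ¬ θ ≠ 2*π - δ} = {2*π - δ} := by
        ext t; simp
      rw [this]
      exact Real.volume_singleton
    have hbound : ∀ᵐ θ : ℝ, θ ∈ Set.uIoc a (a+δ) → ‖F θ + F (θ + δ)‖ ≤ K * δ ^ α := by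
      filter_upwards [hne] with θ hθne hθ
      rw [Set.uIoc_of_le (by linarith)] at hθ
      obtain ⟨hθ1, hθ2⟩ := hθ
      have hmem1 : θ ∈ Set.Ico 0 (2*π) := ⟨by linarith, by linarith⟩
      have hmem2 : θ + δ ∈ Set.Ico 0 (2*π) := by
        constructor
        · linarith
        · have hle : θ + δ ≤ 2*π := by linarith
          rcases lt_or_eq_of_le hle with h | h
          · exact h
          · exact absurd (by linarith : θ = 2*π - δ) hθne
      have hexp : Complex.exp (((θ+δ:ℝ):ℂ) * Complex.I) ^ n
          = - (Complex.exp (((θ:ℝ):ℂ) * Complex.I) ^ n) := by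
        have h1 : ((θ+δ:ℝ):ℂ) * Complex.I = ((θ:ℝ):ℂ)*Complex.I + ((δ:ℝ):ℂ)*Complex.I := by
          push_cast; ring
        rw [h1, Complex.exp_add, mul_pow]
        have h2 : Complex.exp (((δ:ℝ):ℂ)*Complex.I) ^ n = -1 := by
          rw [← Complex.exp_nat_mul]
          have h3 : ((n:ℕ):ℂ) * (((δ:ℝ):ℂ)*Complex.I) = ((π:ℝ):ℂ) * Complex.I := by
            have h4 : ((n:ℝ) * δ : ℝ) = (π:ℝ) := hnδ
            have h5 : (((n:ℝ) * δ : ℝ) : ℂ) = ((π:ℝ):ℂ) := congrArg Complex.ofReal h4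
            push_cast at h5 ⊢
            rw [← h5]; ring
          rw [h3, Complex.exp_pi_mul_I]
        rw [h2]; ring
      have hsum : F θ + F (θ + δ)
          = Complex.exp (((θ:ℝ):ℂ) * Complex.I) ^ n * (G θ - G (θ + δ)) := by
        simp only [hFdef, hGdef]
        rw [hexp]
        ring
      rw [hsum, norm_mul, norm_pow, hnorme θ, one_pow, one_mul]
      have := hGdiff θ (θ + δ) hmem1 hmem2
      have habs : |θ - (θ + δ)| = δ := by
        rw [show θ - (θ + δ) = -δ by ring, abs_neg, abs_of_pos hδ0]
      rw [habs] at this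
      exact this
    have := intervalIntegral.norm_integral_le_of_norm_le_const_ae hbound
    have habs2 : |a + δ - a| = δ := by rw [show a + δ - a = δ by ring, abs_of_pos hδ0]
    rwa [habs2] at this
  -- sum over the n adjacent intervals
  have hadj : ∀ k : ℕ, k < n → IntervalIntegrable F volume
      ((fun k : ℕ => (k:ℝ)*(2*δ)) k) ((fun k : ℕ => (k:ℝ)*(2*δ)) (k+1)) := by
    intro k hk
    have hk1 : (k:ℝ) + 1 ≤ n := by exact_mod_cast Nat.succ_le_of_lt hk
    simp only
    apply hsub
    · positivity
    · push_cast; nlinarith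
    · push_cast; nlinarith
  have hsum := intervalIntegral.sum_integral_adjacent_intervals
    (a := fun k : ℕ => (k:ℝ)*(2*δ)) (μ := volume) (f := F) hadj
  have h0 : ((0:ℕ):ℝ)*(2*δ) = 0 := by norm_num
  have h2pi : ((n:ℕ):ℝ)*(2*δ) = 2*π := by push_cast; nlinarith
  rw [h0, h2pi] at hsum
  have hbig : ‖∫ θ in (0:ℝ)..(2*π), F θ‖ ≤ (n:ℝ) * (K * δ ^ α * δ) := by
    rw [← hsum]
    calc ‖∑ k ∈ Finset.range n, ∫ θ in ((k:ℝ)*(2*δ))..(((k+1:ℕ)):ℝ)*(2*δ), F θ‖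
        ≤ ∑ k ∈ Finset.range n, ‖∫ θ in ((k:ℝ)*(2*δ))..(((k+1:ℕ)):ℝ)*(2*δ), F θ‖ :=
          norm_sum_le _ _
      _ ≤ ∑ _k ∈ Finset.range n, K * δ ^ α * δ :=
          Finset.sum_le_sum (fun i hi => key i (Finset.mem_range.mp hi))
      _ = (n:ℝ) * (K * δ ^ α * δ) := by
          rw [Finset.sum_const, Finset.card_range, nsmul_eq_mul]
  rw [norm_mul]
  have hn1 : ‖(((2*π:ℝ)):ℂ)⁻¹‖ = (2*π)⁻¹ := by
    rw [norm_inv, Complex.norm_real, Real.norm_eq_abs, abs_of_pos (by linarith)]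
  rw [hn1]
  have hrhs : (2*π)⁻¹ * ((n:ℝ) * (K * δ ^ α * δ)) = B * C * π ^ α * ‖x‖ * ‖y‖ / (n:ℝ) ^ α := by
    have hδα : δ ^ α = π ^ α / (n:ℝ) ^ α := by
      rw [hδdef]; exact Real.div_rpow hπ.le (le_of_lt hn0) α
    have hnα : (0:ℝ) < (n:ℝ) ^ α := Real.rpow_pos_of_pos hn0 α
    rw [hδα, hKdef, hδdef]
    field_simp
  calc (2*π)⁻¹ * ‖∫ θ in (0:ℝ)..(2*π), F θ‖
      ≤ (2*π)⁻¹ * ((n:ℝ) * (K * δ ^ α * δ)) :=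
        mul_le_mul_of_nonneg_left hbig (by positivity)
    _ = B * C * π ^ α * ‖x‖ * ‖y‖ / (n:ℝ) ^ α := hrhs
end

section
/- Let α ∈ (0,1). There exists a constant C > 0 such that for all complex numbers λ, ξ of modulus 1, Σ_{n=1}^∞ |λ^n − ξ^n|² / n^{2α+1} ≤ C·|λ − ξ|^{2α}. Equivalently, the 𝕋-eigenvector field E : 𝕋 → ℓ²(ℤ₊) defined by E(λ) = e₀ + Σ_{n≥1} (λ^n / n^{α+1/2}) e_n, where (e_n)_{n≥0} is the canonical orthonormal basis of ℓ²(ℤ₊), is α-Hölderian. -/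
open scoped Real

-- telescoping-type bound on abs of difference of powers
lemma aux_pow_diff (a b : ℂ) (ha : ‖a‖ = 1) (hb : ‖b‖ = 1) (m : ℕ) :
    ‖a ^ m - b ^ m‖ ≤ m * ‖a - b‖ := by
  induction m with
  | zero => simp
  | succ k ih =>
      have : a ^ (k+1) - b ^ (k+1) = a * (a ^ k - b ^ k) + (a - b) * b ^ k := by ring
      rw [this]
      calc ‖a * (a ^ k - b ^ k) + (a - b) * b ^ k‖
          ≤ ‖a * (a ^ k - b ^ k)‖ + ‖(a - b) * b ^ k‖ :=
            norm_add_le _ _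
        _ = ‖a ^ k - b ^ k‖ + ‖a - b‖ := by
            simp [norm_mul, norm_pow, ha, hb]
        _ ≤ k * ‖a - b‖ + ‖a - b‖ := by
            linarith
        _ = (k + 1 : ℕ) * ‖a - b‖ := by push_cast; ring

lemma aux_head (β : ℝ) (hβ0 : -1 < β) (hβ1 : β ≤ 1) (N : ℕ) (hN : 1 ≤ N) :
    ∑ i ∈ Finset.range N, ((i : ℝ) + 1) ^ β ≤ (1 + 1 / (β + 1)) * (N : ℝ) ^ (β + 1) := by
  have hβp : (0:ℝ) < β + 1 := by linarith
  have hN1 : (1:ℝ) ≤ (N:ℝ) := by exact_mod_cast hN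
  have hNpow : (1:ℝ) ≤ (N:ℝ) ^ (β + 1) := by
    calc (1:ℝ) = (1:ℝ) ^ (β+1) := (Real.one_rpow _).symm
    _ ≤ (N:ℝ) ^ (β+1) := Real.rpow_le_rpow zero_le_one hN1 hβp.le
  rcases le_or_gt 0 β with hb | hb
  · -- increasing case: each term ≤ N^β
    have : ∑ i ∈ Finset.range N, ((i : ℝ) + 1) ^ β ≤ ∑ _i ∈ Finset.range N, (N:ℝ) ^ β := by
      refine Finset.sum_le_sum fun i hi => ?_
      have : (i:ℝ) + 1 ≤ (N:ℝ) := by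
        have := Finset.mem_range.1 hi
        exact_mod_cast Nat.succ_le_of_lt this
      exact Real.rpow_le_rpow (by positivity) this hb
    refine this.trans ?_
    rw [Finset.sum_const, Finset.card_range, nsmul_eq_mul]
    have : (N:ℝ) * (N:ℝ) ^ β = (N:ℝ) ^ (β + 1) := by
      rw [Real.rpow_add (by linarith : (0:ℝ) < N), Real.rpow_one]; ring
    rw [this]
    nlinarith [hNpow, one_div_pos.2 hβp]
  · -- decreasing case: integral comparison
    obtain ⟨M, rfl⟩ : ∃ M, N = M + 1 := ⟨N - 1, (Nat.succ_pred_eq_of_pos hN).symm⟩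
    rw [Finset.sum_range_succ']
    have hanti : AntitoneOn (fun x : ℝ => x ^ β) (Set.Icc (1:ℝ) (1 + (M:ℕ))) := by
      intro x hx y hy hxy
      exact Real.rpow_le_rpow_of_nonpos (lt_of_lt_of_le zero_lt_one hx.1) hxy hb.le
    have hint := hanti.sum_le_integral
    have hcast : ∀ i : ℕ, (1:ℝ) + ((i + 1 : ℕ) : ℝ) = ((i:ℝ) + 1) + 1 := by
      intro i; push_cast; ring
    have hsum : ∑ i ∈ Finset.range M, (((i:ℝ) + 1) + 1) ^ β
        ≤ ∫ x in (1:ℝ)..(1 + (M:ℕ)), x ^ β := by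
      refine le_trans (le_of_eq ?_) hint
      refine Finset.sum_congr rfl fun i _ => ?_
      rw [hcast]
    have hintval : (∫ x in (1:ℝ)..(1 + (M:ℕ)), x ^ β)
        = ((1 + (M:ℝ)) ^ (β+1) - 1) / (β + 1) := by
      rw [integral_rpow (Or.inl hβ0)]
      norm_num
    have h1M : ((M + 1 : ℕ) : ℝ) = 1 + (M:ℝ) := by push_cast; ring
    have hile : ((1 + (M:ℝ)) ^ (β+1) - 1) / (β + 1) ≤ ((M+1:ℕ):ℝ) ^ (β+1) / (β+1) := by
      rw [h1M]
      apply div_le_div_of_nonneg_right ?_ hβp.le |>.trans_eq rfl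
      · linarith [Real.rpow_nonneg (by positivity : (0:ℝ) ≤ 1 + (M:ℝ)) (β+1)]
    have : ∑ i ∈ Finset.range M, (((i:ℝ)+1) + 1) ^ β + ((0:ℝ)+1) ^ β
        ≤ ((M+1:ℕ):ℝ) ^ (β+1) / (β+1) + 1 := by
      have h1 : ((0:ℝ)+1) ^ β = 1 := by norm_num
      rw [h1]
      have := hsum.trans (hintval.le.trans hile)
      linarith
    refine le_trans (le_of_eq ?_) (this.trans ?_)
    · congr 1
      · refine Finset.sum_congr rfl fun i _ => ?_
        push_cast; ring_nf
      · norm_num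
    · have : ((M+1:ℕ):ℝ) ^ (β+1) / (β+1) = (1/(β+1)) * ((M+1:ℕ):ℝ) ^ (β+1) := by ring
      rw [this]
      nlinarith [hNpow]

lemma aux_tail (p : ℝ) (hp : 1 < p) (N k : ℕ) (hN : 1 ≤ N) :
    ∑ i ∈ Finset.range k, ((N : ℝ) + (i:ℝ) + 1) ^ (-p) ≤ (N : ℝ) ^ (1 - p) / (p - 1) := by
  have hN0 : (0:ℝ) < (N:ℝ) := by exact_mod_cast hN
  have hanti : AntitoneOn (fun x : ℝ => x ^ (-p)) (Set.Icc ((N:ℝ)) ((N:ℝ) + (k:ℕ))) := by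
    intro x hx y hy hxy
    exact Real.rpow_le_rpow_of_nonpos (lt_of_lt_of_le hN0 hx.1) hxy (by linarith)
  have hint := hanti.sum_le_integral
  have hsum : ∑ i ∈ Finset.range k, ((N:ℝ) + (i:ℝ) + 1) ^ (-p)
      ≤ ∫ x in ((N:ℝ))..((N:ℝ) + (k:ℕ)), x ^ (-p) := by
    refine le_trans (le_of_eq ?_) hint
    refine Finset.sum_congr rfl fun i _ => ?_
    push_cast; ring_nf
  have h0 : (0:ℝ) ∉ Set.uIcc ((N:ℝ)) ((N:ℝ) + (k:ℕ)) := by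
    rw [Set.uIcc_of_le (le_add_of_nonneg_right (by positivity))]
    intro h
    exact absurd h.1 hN0.not_ge
  have hval : (∫ x in ((N:ℝ))..((N:ℝ) + (k:ℕ)), x ^ (-p))
      = (((N:ℝ) + (k:ℝ)) ^ (-p+1) - (N:ℝ) ^ (-p+1)) / (-p + 1) := by
    rw [integral_rpow (Or.inr ⟨by linarith, h0⟩)]
  refine hsum.trans (hval.le.trans ?_)
  have hnum : (((N:ℝ) + (k:ℝ)) ^ (-p+1) - (N:ℝ) ^ (-p+1)) / (-p + 1)
      = ((N:ℝ) ^ (-p+1) - ((N:ℝ) + (k:ℝ)) ^ (-p+1)) / (p - 1) := by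
    rw [div_eq_div_iff (by linarith) (by linarith)]; ring
  rw [hnum]
  have h1 : (-p + 1) = 1 - p := by ring
  rw [h1]
  apply div_le_div_of_nonneg_right ?_ (by linarith : (0:ℝ) ≤ p - 1) |>.trans_eq rfl
  · linarith [Real.rpow_nonneg (by positivity : (0:ℝ) ≤ (N:ℝ) + (k:ℝ)) (1-p)]

/-- Upper bound half of Theorem 2.10: for `α ∈ (0,1)` there is `C > 0` such that for all
unimodular `λ, ξ`, `Σ_{n≥1} |λ^n − ξ^n|²/n^{2α+1} ≤ C·|λ−ξ|^{2α}`; i.e. the eigenvector field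
`E(λ) = e₀ + Σ_{n≥1} (λ^n/n^{α+1/2}) e_n` of the weighted backward shift is `α`-Hölderian. -/
theorem stmt1 (α : ℝ) (hα : α ∈ Set.Ioo (0 : ℝ) 1) :
    ∃ C > (0 : ℝ), ∀ lam xi : ℂ, ‖lam‖ = 1 → ‖xi‖ = 1 →
      ∑' n : ℕ, (‖lam ^ (n + 1) - xi ^ (n + 1)‖) ^ 2 / ((n : ℝ) + 1) ^ (2 * α + 1)
        ≤ C * (‖lam - xi‖) ^ (2 * α) := by
  obtain ⟨hα0, hα1⟩ := hα
  have h2 : (0:ℝ) < 2 - 2*α := by linarith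
  set K : ℝ := 1 + 1/(2-2*α) with hKdef
  have hK : 0 < K := by
    have := one_div_pos.2 h2
    rw [hKdef]; linarith
  refine ⟨K * (3:ℝ) ^ (2-2*α) + 2/α, ?_, ?_⟩
  · exact add_pos (mul_pos hK (Real.rpow_pos_of_pos (by norm_num) _))
      (div_pos (by norm_num) hα0)
  intro lam xi hlam hxi
  set δ := ‖lam - xi‖ with hδdef
  set f : ℕ → ℝ := fun n =>
    (‖lam ^ (n + 1) - xi ^ (n + 1)‖) ^ 2 / ((n : ℝ) + 1) ^ (2 * α + 1) with hfdef
  have hfnonneg : ∀ n, 0 ≤ f n := by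
    intro n
    have : (0:ℝ) < ((n : ℝ) + 1) ^ (2 * α + 1) := Real.rpow_pos_of_pos (by positivity) _
    positivity
  have habs2 : ∀ m : ℕ, ‖lam ^ m - xi ^ m‖ ≤ 2 := by
    intro m
    calc ‖lam ^ m - xi ^ m‖
        ≤ ‖lam ^ m - 0‖ + ‖0 - xi ^ m‖ := norm_sub_le_norm_sub_add_norm_sub _ 0 _
      _ = 2 := by rw [sub_zero, zero_sub, norm_neg, norm_pow, norm_pow, hlam, hxi]; norm_num
  have hfle : ∀ n, f n ≤ 4 * ((n:ℝ)+1) ^ (-(2*α+1)) := by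
    intro n
    have hBpos : (0:ℝ) < ((n : ℝ) + 1) ^ (2 * α + 1) := Real.rpow_pos_of_pos (by positivity) _
    have h4 : (‖lam ^ (n + 1) - xi ^ (n + 1)‖) ^ 2 ≤ 4 := by
      have := habs2 (n+1)
      nlinarith [norm_nonneg (lam ^ (n + 1) - xi ^ (n + 1))]
    calc f n ≤ 4 / ((n : ℝ) + 1) ^ (2 * α + 1) := by
          rw [hfdef]
          exact div_le_div_of_nonneg_right h4 hBpos.le |>.trans_eq rfl
      _ = 4 * ((n:ℝ)+1) ^ (-(2*α+1)) := by
          rw [Real.rpow_neg (by positivity)]; ring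
  have hg : Summable (fun n : ℕ => ((n:ℝ)+1) ^ (-(2*α+1))) := by
    have h1 : Summable (fun n : ℕ => ((n:ℝ)) ^ (-(2*α+1))) :=
      Real.summable_nat_rpow.2 (by linarith)
    have := (summable_nat_add_iff 1).2 h1
    simpa using this
  have hf : Summable f :=
    Summable.of_nonneg_of_le hfnonneg hfle (hg.mul_left 4)
  by_cases hδ0 : δ = 0
  · have hlx : lam = xi := sub_eq_zero.mp (norm_eq_zero.mp hδ0)
    have hf0 : f = fun _ => 0 := funext fun n => by simp [hfdef, hlx]
    rw [hf0, tsum_zero, hδ0, Real.zero_rpow (by positivity : 2*α ≠ 0), mul_zero]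
  · have hδ : 0 < δ := lt_of_le_of_ne (norm_nonneg _) (Ne.symm hδ0)
    have hδ2 : δ ≤ 2 := by
      have := habs2 1
      simpa using this
    set N : ℕ := ⌈1/δ⌉₊ with hNdef
    have hN1 : 1 ≤ N := Nat.one_le_ceil_iff.2 (by positivity)
    have hNge : 1/δ ≤ (N:ℝ) := Nat.le_ceil _
    have hNle : (N:ℝ) ≤ 3/δ := by
      have hlt : (N:ℝ) < 1/δ + 1 := Nat.ceil_lt_add_one (by positivity)
      have h12 : (1:ℝ) ≤ 2/δ := (one_le_div hδ).2 hδ2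
      have : 1/δ + 2/δ = 3/δ := by ring
      linarith
    have hδ2α : (N:ℝ) ^ (-(2*α)) ≤ δ ^ (2*α) := by
      have h1 : (N:ℝ) ^ (-(2*α)) ≤ (1/δ) ^ (-(2*α)) :=
        Real.rpow_le_rpow_of_nonpos (by positivity) hNge (by linarith)
      have h2' : (1/δ) ^ (-(2*α)) = δ ^ (2*α) := by
        rw [one_div, Real.rpow_neg (by positivity), Real.inv_rpow hδ.le, inv_inv]
      rw [h2'] at h1; exact h1
    -- head bound
    have hhead : ∑ i ∈ Finset.range N, f i ≤ K * (3:ℝ) ^ (2-2*α) * δ ^ (2*α) := by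
      have hstep : ∀ i : ℕ, f i ≤ δ^2 * ((i:ℝ)+1) ^ (1-2*α) := by
        intro i
        have hBpos : (0:ℝ) < ((i : ℝ) + 1) ^ (2 * α + 1) := Real.rpow_pos_of_pos (by positivity) _
        have hA := aux_pow_diff lam xi hlam hxi (i+1)
        have hA' : ‖lam ^ (i+1) - xi ^ (i+1)‖ ≤ ((i:ℝ)+1) * δ := by
          rw [hδdef]; push_cast at hA ⊢; linarith
        have hsq : (‖lam ^ (i+1) - xi ^ (i+1)‖)^2 ≤ (((i:ℝ)+1) * δ)^2 := by
          have := norm_nonneg (lam ^ (i+1) - xi ^ (i+1))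
          nlinarith
        have e1 : ((i:ℝ)+1) ^ ((2:ℕ):ℝ) / ((i:ℝ)+1) ^ (2*α+1) = ((i:ℝ)+1) ^ (1 - 2*α) := by
          rw [← Real.rpow_sub (by positivity)]
          norm_num
          congr 1
          ring
        calc f i ≤ (((i:ℝ)+1) * δ)^2 / ((i : ℝ) + 1) ^ (2 * α + 1) := by
              rw [hfdef]
              exact div_le_div_of_nonneg_right hsq hBpos.le |>.trans_eq rfl
          _ = δ^2 * (((i:ℝ)+1) ^ ((2:ℕ):ℝ) / ((i:ℝ)+1) ^ (2*α+1)) := by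
              rw [Real.rpow_natCast]; ring
          _ = δ^2 * ((i:ℝ)+1) ^ (1 - 2*α) := by rw [e1]
      calc ∑ i ∈ Finset.range N, f i
          ≤ ∑ i ∈ Finset.range N, δ^2 * ((i:ℝ)+1) ^ (1-2*α) :=
            Finset.sum_le_sum fun i _ => hstep i
        _ = δ^2 * ∑ i ∈ Finset.range N, ((i:ℝ)+1) ^ (1-2*α) := by
            rw [Finset.mul_sum]
        _ ≤ δ^2 * (K * (N:ℝ) ^ (2-2*α)) := by
            have hh := aux_head (1-2*α) (by linarith) (by linarith) N hN1
            have he : 1-2*α + 1 = 2 - 2*α := by ring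
            rw [he] at hh
            have hδsq : (0:ℝ) ≤ δ^2 := by positivity
            rw [hKdef]
            exact mul_le_mul_of_nonneg_left hh hδsq
        _ ≤ δ^2 * (K * (3/δ) ^ (2-2*α)) := by
            have hmono : (N:ℝ) ^ (2-2*α) ≤ (3/δ) ^ (2-2*α) :=
              Real.rpow_le_rpow (by positivity) hNle h2.le
            have hδsq : (0:ℝ) ≤ δ^2 := by positivity
            exact mul_le_mul_of_nonneg_left (mul_le_mul_of_nonneg_left hmono hK.le) hδsq
        _ = K * (3:ℝ) ^ (2-2*α) * δ ^ (2*α) := by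
            rw [Real.div_rpow (by norm_num) hδ.le]
            have hd : δ ^ ((2:ℕ):ℝ) / δ ^ (2-2*α) = δ ^ (2*α) := by
              rw [← Real.rpow_sub hδ]
              congr 1
              push_cast
              ring
            rw [← hd, Real.rpow_natCast]
            field_simp
    -- tail bound
    have htail : ∑' i : ℕ, f (i + N) ≤ (2/α) * δ ^ (2*α) := by
      have key : ∀ k : ℕ, ∑ i ∈ Finset.range k, f (i + N) ≤ (2/α) * δ ^ (2*α) := by
        intro k
        have hstep : ∀ i : ℕ, f (i + N) ≤ 4 * ((N:ℝ) + (i:ℝ) + 1) ^ (-(2*α+1)) := by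
          intro i
          have := hfle (i + N)
          have hc : ((i + N : ℕ):ℝ) + 1 = (N:ℝ) + (i:ℝ) + 1 := by push_cast; ring
          rw [hc] at this
          exact this
        calc ∑ i ∈ Finset.range k, f (i + N)
            ≤ ∑ i ∈ Finset.range k, 4 * ((N:ℝ) + (i:ℝ) + 1) ^ (-(2*α+1)) :=
              Finset.sum_le_sum fun i _ => hstep i
          _ = 4 * ∑ i ∈ Finset.range k, ((N:ℝ) + (i:ℝ) + 1) ^ (-(2*α+1)) := by
              rw [Finset.mul_sum]
          _ ≤ 4 * ((N:ℝ) ^ (1 - (2*α+1)) / ((2*α+1) - 1)) := by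
              have := aux_tail (2*α+1) (by linarith) N k hN1
              linarith
          _ = (2/α) * (N:ℝ) ^ (-(2*α)) := by
              have he : 1 - (2*α+1) = -(2*α) := by ring
              rw [he]
              have ha : (2*α+1) - 1 = 2*α := by ring
              rw [ha]
              have hαne : α ≠ 0 := ne_of_gt hα0
              field_simp
              ring
          _ ≤ (2/α) * δ ^ (2*α) := by
              have h2α : (0:ℝ) < 2/α := by positivity
              nlinarith [hδ2α]
      exact Real.tsum_le_of_sum_range_le (fun n => hfnonneg _) key
    calc ∑' n : ℕ, f n = ∑ i ∈ Finset.range N, f i + ∑' i : ℕ, f (i + N) :=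
          (Summable.sum_add_tsum_nat_add N hf).symm
      _ ≤ K * (3:ℝ) ^ (2-2*α) * δ ^ (2*α) + (2/α) * δ ^ (2*α) := add_le_add hhead htail
      _ = (K * (3:ℝ) ^ (2-2*α) + 2/α) * δ ^ (2*α) := by ring
end

section
/- Let α ∈ (0,1). There exists a constant c > 0 such that for every even integer N ≥ 2, Σ_{n=1}^∞ |e^{iπn/N} − 1|² / n^{2α+1} ≥ c·|e^{iπ/N} − 1|^{2α}. Consequently, the map E : 𝕋 → ℓ²(ℤ₊) given by E(λ) = e₀ + Σ_{n≥1} (λ^n / n^{α+1/2}) e_n is not β-Hölderian for any β > α: for every β > α there is no constant C > 0 with Σ_{n=1}^∞ |λ^n − ξ^n|²/n^{2α+1} ≤ C·|λ − ξ|^{2β} for all λ, ξ on the unit circle. -/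
set_option maxHeartbeats 1000000

open scoped Real

lemma L1' (θ : ℝ) : ‖Complex.exp ((θ : ℂ) * Complex.I) - 1‖ ^ 2
    = 2 - 2 * Real.cos θ := by
  rw [Complex.sq_norm, Complex.normSq_apply]
  simp [Complex.exp_mul_I, Complex.cos_ofReal_re, Complex.sin_ofReal_re,
    Complex.sub_re, Complex.sub_im, Complex.add_re, Complex.add_im, Complex.mul_re, Complex.mul_im]
  nlinarith [Real.sin_sq_add_cos_sq θ]

lemma L2' (θ : ℝ) (hθ : 0 ≤ θ) : ‖Complex.exp ((θ : ℂ) * Complex.I) - 1‖ ≤ θ := by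
  have h1 : ‖Complex.exp ((θ : ℂ) * Complex.I) - 1‖ ^ 2 ≤ θ ^ 2 := by
    rw [L1']; nlinarith [Real.one_sub_sq_div_two_le_cos (x := θ)]
  have := norm_nonneg (Complex.exp ((θ : ℂ) * Complex.I) - 1)
  nlinarith

lemma Lsum' (p : ℝ) (hp : 1 < p) (f : ℕ → ℂ) (hf : ∀ n, ‖f n‖ ≤ 2) :
    Summable (fun n : ℕ => ‖f n‖ ^ 2 / ((n : ℝ) + 1) ^ p) := by
  have hg : Summable (fun n : ℕ => (4 : ℝ) / ((n : ℝ) + 1) ^ p) := by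
    have h0 : Summable (fun n : ℕ => 1 / ((n : ℝ)) ^ p) :=
      Real.summable_one_div_nat_rpow.mpr hp
    have h1 : Summable (fun n : ℕ => 1 / (((n + 1) : ℕ) : ℝ) ^ p) :=
      (summable_nat_add_iff 1).mpr h0
    have h2 : Summable (fun n : ℕ => 1 / ((n : ℝ) + 1) ^ p) := by
      convert h1 using 2 with n; push_cast; ring_nf
    simpa [div_eq_mul_inv] using h2.mul_left 4
  refine Summable.of_nonneg_of_le (fun n => by positivity) (fun n => ?_) hg
  have h1 : (0:ℝ) < ((n : ℝ) + 1) ^ p := by positivity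
  have h2 : ‖f n‖ ^ 2 ≤ 4 := by nlinarith [hf n, norm_nonneg (f n)]
  gcongr

lemma Lkey (α : ℝ) (hα : α ∈ Set.Ioo (0 : ℝ) 1) :
    ∃ c > (0 : ℝ), ∀ N : ℕ, Even N → 2 ≤ N →
      c * (‖Complex.exp (((π / N : ℝ) : ℂ) * Complex.I) - 1‖) ^ (2 * α)
        ≤ ∑' n : ℕ,
            (‖Complex.exp (((π * ((n : ℝ) + 1) / N : ℝ) : ℂ) * Complex.I) - 1‖) ^ 2
              / ((n : ℝ) + 1) ^ (2 * α + 1) := by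
  obtain ⟨hα0, hα1⟩ := hα
  set p : ℝ := 2 * α + 1 with hp
  have hp1 : 1 < p := by simp only [hp]; linarith
  have hc2 : (0:ℝ) < (2:ℝ) ^ (-p) := Real.rpow_pos_of_pos (by norm_num) _
  have hcπ : (0:ℝ) < π ^ (-(2*α)) := Real.rpow_pos_of_pos Real.pi_pos _
  refine ⟨(2:ℝ) ^ (-p) * π ^ (-(2*α)), by positivity, ?_⟩
  intro N hev hN2
  obtain ⟨m, hm⟩ := hev
  have hm1 : 1 ≤ m := by omega
  have hNR : (N:ℝ) = (m:ℝ) + (m:ℝ) := by rw [hm]; push_cast; ring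
  have hmpos : (0:ℝ) < (m:ℝ) := by exact_mod_cast hm1
  have hNpos : (0:ℝ) < N := by linarith
  have hsum : Summable (fun n : ℕ =>
      (‖Complex.exp (((π * ((n : ℝ) + 1) / N : ℝ) : ℂ) * Complex.I) - 1‖) ^ 2
        / ((n : ℝ) + 1) ^ p) := by
    refine Lsum' p hp1 _ (fun n => ?_)
    calc ‖Complex.exp (((π * ((n : ℝ) + 1) / N : ℝ) : ℂ) * Complex.I) - 1‖
        ≤ ‖Complex.exp (((π * ((n : ℝ) + 1) / N : ℝ) : ℂ) * Complex.I)‖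
            + ‖(1:ℂ)‖ := norm_sub_le _ _
      _ ≤ 2 := by rw [Complex.norm_exp_ofReal_mul_I, norm_one]; norm_num
  set S : Finset ℕ := Finset.Icc (N - 1) (N - 1 + m) with hS
  have hcard : S.card = m + 1 := by rw [hS, Nat.card_Icc]; omega
  have hterm : ∀ n ∈ S, 2 / ((2*(N:ℝ)) ^ p) ≤
      (‖Complex.exp (((π * ((n : ℝ) + 1) / N : ℝ) : ℂ) * Complex.I) - 1‖) ^ 2
        / ((n : ℝ) + 1) ^ p := by
    intro n hn
    simp only [hS, Finset.mem_Icc] at hn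
    have hn1 : N ≤ n + 1 := by omega
    have hn2 : n + 1 ≤ N + m := by omega
    have hn1R : (N:ℝ) ≤ (n:ℝ) + 1 := by exact_mod_cast hn1
    have hn2R : (n:ℝ) + 1 ≤ (N:ℝ) + m := by exact_mod_cast hn2
    set θ : ℝ := π * ((n : ℝ) + 1) / N with hθ
    have hθlo : π ≤ θ := by
      rw [hθ, le_div_iff₀ hNpos]
      nlinarith [Real.pi_pos]
    have hθhi : θ ≤ π + π / 2 := by
      rw [hθ, div_le_iff₀ hNpos]
      nlinarith [Real.pi_pos]
    have hcos : Real.cos θ ≤ 0 :=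
      Real.cos_nonpos_of_pi_div_two_le_of_le (by linarith [Real.pi_pos]) (by linarith)
    have hnum : (2:ℝ) ≤ ‖Complex.exp ((θ : ℂ) * Complex.I) - 1‖ ^ 2 := by
      rw [L1']; linarith
    have hden : ((n:ℝ) + 1) ^ p ≤ (2*(N:ℝ)) ^ p := by
      apply Real.rpow_le_rpow (by positivity) ?_ (by linarith)
      linarith
    exact div_le_div₀ (by positivity) hnum (by positivity) hden
  have hsm : ((m:ℝ) + 1) * (2 / ((2*(N:ℝ)) ^ p)) ≤
      ∑ n ∈ S, (‖Complex.exp (((π * ((n : ℝ) + 1) / N : ℝ) : ℂ) * Complex.I) - 1‖) ^ 2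
        / ((n : ℝ) + 1) ^ p := by
    have h := Finset.card_nsmul_le_sum S _ _ hterm
    rw [hcard, nsmul_eq_mul] at h
    have h2 : ((m:ℝ) + 1) = ((m+1 : ℕ):ℝ) := by push_cast; ring
    rw [h2]
    exact h
  have hsum_le : ∑ n ∈ S, (‖Complex.exp (((π * ((n : ℝ) + 1) / N : ℝ) : ℂ) * Complex.I) - 1‖) ^ 2
        / ((n : ℝ) + 1) ^ p ≤ ∑' n : ℕ,
      (‖Complex.exp (((π * ((n : ℝ) + 1) / N : ℝ) : ℂ) * Complex.I) - 1‖) ^ 2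
        / ((n : ℝ) + 1) ^ p :=
    Summable.sum_le_tsum S (fun n _ => by positivity) hsum
  have hchord : ‖Complex.exp (((π / N : ℝ) : ℂ) * Complex.I) - 1‖ ≤ π / N :=
    L2' _ (by positivity)
  have hLHS : ((2:ℝ) ^ (-p) * π ^ (-(2*α))) *
      (‖Complex.exp (((π / N : ℝ) : ℂ) * Complex.I) - 1‖) ^ (2 * α)
      ≤ ((2:ℝ) ^ (-p) * π ^ (-(2*α))) * (π / (N:ℝ)) ^ (2 * α) := by
    apply mul_le_mul_of_nonneg_left ?_ (by positivity)
    exact Real.rpow_le_rpow (norm_nonneg _) hchord (by linarith)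
  have e1 : (π / (N:ℝ)) ^ (2*α) = π ^ (2*α) / (N:ℝ) ^ (2*α) :=
    Real.div_rpow Real.pi_pos.le hNpos.le (2*α)
  have e2 : (2*(N:ℝ)) ^ p = 2 ^ p * ((N:ℝ) ^ (2*α) * (N:ℝ)) := by
    rw [Real.mul_rpow (by norm_num) hNpos.le]
    congr 1
    rw [hp, Real.rpow_add hNpos, Real.rpow_one]
  have e3 : π ^ (-(2*α)) * π ^ (2*α) = 1 := by
    rw [← Real.rpow_add Real.pi_pos]; simp
  have h5 : (2:ℝ) ^ (-p) = ((2:ℝ) ^ p)⁻¹ := Real.rpow_neg (by norm_num) p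
  have hB : (0:ℝ) < (N:ℝ) ^ (2*α) := Real.rpow_pos_of_pos hNpos _
  have h2p : (0:ℝ) < (2:ℝ) ^ p := Real.rpow_pos_of_pos (by norm_num) _
  have halg : ((2:ℝ) ^ (-p) * π ^ (-(2*α))) * (π / (N:ℝ)) ^ (2 * α)
      ≤ ((m:ℝ) + 1) * (2 / ((2*(N:ℝ)) ^ p)) := by
    have eL : ((2:ℝ) ^ (-p) * π ^ (-(2*α))) * (π / (N:ℝ)) ^ (2 * α)
        = (2:ℝ) ^ (-p) / (N:ℝ) ^ (2*α) := by
      rw [e1]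
      calc (2:ℝ) ^ (-p) * π ^ (-(2*α)) * (π ^ (2*α) / (N:ℝ) ^ (2*α))
          = (2:ℝ) ^ (-p) * (π ^ (-(2*α)) * π ^ (2*α)) / (N:ℝ) ^ (2*α) := by ring
        _ = (2:ℝ) ^ (-p) / (N:ℝ) ^ (2*α) := by rw [e3]; ring
    have eR : (m:ℝ) * (2 / ((2*(N:ℝ)) ^ p)) = (2:ℝ) ^ (-p) / (N:ℝ) ^ (2*α) := by
      rw [e2, h5]
      have hN2m : 2*(m:ℝ) = (N:ℝ) := by linarith
      have hA : ((2:ℝ) ^ p) ≠ 0 := ne_of_gt h2p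
      have hBne : ((N:ℝ) ^ (2*α)) ≠ 0 := ne_of_gt hB
      have hNne : (N:ℝ) ≠ 0 := ne_of_gt hNpos
      field_simp
      linear_combination hN2m
    have hX : (0:ℝ) < 2 / ((2*(N:ℝ)) ^ p) := by
      have : (0:ℝ) < (2*(N:ℝ)) ^ p := Real.rpow_pos_of_pos (by linarith) _
      positivity
    rw [eL, ← eR]
    nlinarith [hX]
  exact le_trans hLHS (le_trans halg (le_trans hsm hsum_le))

/-- Sharpness half of Theorem 2.10: for `α ∈ (0,1)`, testing at `λ_N = e^{iπ/N}` shows that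
`Σ_{n≥1} |λ_N^n − 1|²/n^{2α+1} ≥ c·|λ_N − 1|^{2α}` for every even `N ≥ 2`, and consequently
the eigenvector field `E(λ) = e₀ + Σ_{n≥1} (λ^n/n^{α+1/2}) e_n` is not `β`-Hölderian for any
`β > α`. -/
theorem stmt2 (α : ℝ) (hα : α ∈ Set.Ioo (0 : ℝ) 1) :
    (∃ c > (0 : ℝ), ∀ N : ℕ, Even N → 2 ≤ N →
      c * (‖Complex.exp (((π / N : ℝ) : ℂ) * Complex.I) - 1‖) ^ (2 * α)
        ≤ ∑' n : ℕ,
            (‖Complex.exp (((π * ((n : ℝ) + 1) / N : ℝ) : ℂ) * Complex.I) - 1‖) ^ 2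
              / ((n : ℝ) + 1) ^ (2 * α + 1))
    ∧ ∀ β : ℝ, α < β →
        ¬ ∃ C > (0 : ℝ), ∀ lam xi : ℂ, ‖lam‖ = 1 → ‖xi‖ = 1 →
          ∑' n : ℕ, (‖lam ^ (n + 1) - xi ^ (n + 1)‖) ^ 2 / ((n : ℝ) + 1) ^ (2 * α + 1)
            ≤ C * (‖lam - xi‖) ^ (2 * β) := by
  obtain ⟨c, hc, hkey⟩ := Lkey α hα
  refine ⟨⟨c, hc, hkey⟩, ?_⟩
  rintro β hβ ⟨C, hC, H⟩
  set ε : ℝ := 2 * β - 2 * α with hε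
  have hεpos : 0 < ε := by simp only [hε]; linarith
  set y : ℝ := (c / C) ^ (1 / ε) with hy
  have hy0 : 0 < y := Real.rpow_pos_of_pos (by positivity) _
  set m : ℕ := ⌈π / y⌉₊ + 1 with hmdef
  set N : ℕ := 2 * m with hNdef
  have hm1 : 1 ≤ m := by omega
  have hN2 : 2 ≤ N := by omega
  have hNev : Even N := ⟨m, by omega⟩
  have hNR : (0:ℝ) < N := by positivity
  have hNy : π / y < (N : ℝ) := by
    have h1 : π / y ≤ (⌈π / y⌉₊ : ℝ) := Nat.le_ceil _
    have h2' : ⌈π / y⌉₊ < N := by omega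
    have h2 : ((⌈π / y⌉₊ : ℕ) : ℝ) < (N : ℝ) := by exact_mod_cast h2'
    linarith
  -- the test point
  set lam : ℂ := Complex.exp (((π / N : ℝ) : ℂ) * Complex.I) with hlam
  have hlam1 : ‖lam‖ = 1 := Complex.norm_exp_ofReal_mul_I _
  have hH := H lam 1 hlam1 norm_one
  have hpow : ∀ n : ℕ, lam ^ (n + 1) - (1:ℂ) ^ (n + 1)
      = Complex.exp (((π * ((n : ℝ) + 1) / N : ℝ) : ℂ) * Complex.I) - 1 := by
    intro n
    rw [one_pow, hlam, ← Complex.exp_nat_mul]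
    congr 2
    push_cast
    ring
  rw [tsum_congr (fun n => by rw [hpow n])] at hH
  have hlow := hkey N hNev hN2
  -- r := |lam - 1|
  set r : ℝ := ‖Complex.exp (((π / N : ℝ) : ℂ) * Complex.I) - 1‖ with hr
  have hrπ : r ≤ π / N := L2' _ (by positivity)
  have hrpos : 0 < r := by
    have hcos : Real.cos (π / N) < 1 := by
      have hne : π / (N:ℝ) ≠ 0 := by positivity
      rcases lt_or_eq_of_le (Real.cos_le_one (π / N)) with h | h
      · exact h
      · exfalso
        have hp0 : (0:ℝ) < π / N := by positivity
        have hx1 : -(2 * π) < π / (N:ℝ) := by linarith [Real.pi_pos]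
        have hN1 : (1:ℝ) ≤ N := by exact_mod_cast (by omega : 1 ≤ N)
        have hx2 : π / (N:ℝ) < 2 * π := by
          rw [div_lt_iff₀ hNR]
          nlinarith [Real.pi_pos, hN1]
        have := (Real.cos_eq_one_iff_of_lt_of_lt hx1 hx2).mp h
        exact hne this
    have hsq : r ^ 2 = 2 - 2 * Real.cos (π / N) := L1' _
    nlinarith [norm_nonneg (Complex.exp (((π / N : ℝ) : ℂ) * Complex.I) - 1)]
  -- chain: c * r^{2α} ≤ tsum ≤ C * r^{2β}
  have hchain : c * r ^ (2 * α) ≤ C * r ^ (2 * β) := le_trans hlow (by convert hH using 3)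
  have hsplit : r ^ (2 * β) = r ^ ε * r ^ (2 * α) := by
    rw [← Real.rpow_add hrpos]; congr 1; simp only [hε]; ring
  have hstep : c ≤ C * r ^ ε := by
    have h1 : c * r ^ (2*α) ≤ (C * r ^ ε) * r ^ (2*α) := by
      rw [mul_assoc, ← hsplit]; exact hchain
    have h2 : (0:ℝ) < r ^ (2*α) := Real.rpow_pos_of_pos hrpos _
    exact le_of_mul_le_mul_right h1 h2
  have hrlt : r < y := by
    have h1 : π / (N:ℝ) < y := by
      rw [div_lt_iff₀ hNR]
      rw [div_lt_iff₀ hy0] at hNy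
      linarith
    linarith
  have hyε : y ^ ε = c / C := by
    rw [hy, ← Real.rpow_mul (by positivity), one_div_mul_cancel (ne_of_gt hεpos),
      Real.rpow_one]
  have hfin : C * r ^ ε < c := by
    have h1 : r ^ ε < y ^ ε := Real.rpow_lt_rpow hrpos.le hrlt hεpos
    rw [hyε] at h1
    have h2 : C * r ^ ε < C * (c / C) := by exact mul_lt_mul_of_pos_left h1 hC
    rwa [mul_div_cancel₀ _ (ne_of_gt hC)] at h2
  linarith
end

section
/- Let H be a complex Hilbert space whose inner product ⟨·,·⟩ is conjugate-linear in the first variable, and let m be a Borel probability measure on H such that for every x ∈ H the function z ↦ ⟨x, z⟩ is square-integrable with respect to m, and such that m is invariant under the map z ↦ i·z. Then for all x, y ∈ H: ∫_H Re⟨x,z⟩·Re⟨y,z⟩ dm(z) = ∫_H Im⟨x,z⟩·Im⟨y,z⟩ dm(z) = (1/2)·Re(∫_H ⟨x,z⟩·conj(⟨y,z⟩) dm(z)), and ∫_H Im⟨x,z⟩·Re⟨y,z⟩ dm(z) = − ∫_H Re⟨x,z⟩·Im⟨y,z⟩ dm(z) = (1/2)·Im(∫_H ⟨x,z⟩·conj(⟨y,z⟩)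 dm(z)). -/
open MeasureTheory

/-- Lemma 3.2 (rotation invariance of a Gaussian measure): if `m` is a Borel probability
measure on a complex Hilbert space `H` which is invariant under `z ↦ i·z` and such that all
functionals `z ↦ ⟨x,z⟩` are square-integrable, then the covariances of the real and imaginary
parts of the functionals are given by `(1/2)Re⟨Rx,y⟩` and `(1/2)Im⟨Rx,y⟩`. -/
theorem stmt4 {H : Type*} [NormedAddCommGroup H] [InnerProductSpace ℂ H]
    [MeasurableSpace H] [BorelSpace H]
    (m : Measure H) [IsProbabilityMeasure m]
    (hL2 : ∀ x : H, MemLp (fun z : H => (inner ℂ x z : ℂ)) 2 m)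
    (hinv : Measure.map (fun z : H => (Complex.I : ℂ) • z) m = m)
    (x y : H) :
    ((∫ z, (inner ℂ x z : ℂ).re * (inner ℂ y z : ℂ).re ∂m)
        = ∫ z, (inner ℂ x z : ℂ).im * (inner ℂ y z : ℂ).im ∂m)
    ∧ ((∫ z, (inner ℂ x z : ℂ).re * (inner ℂ y z : ℂ).re ∂m)
        = (1 / 2) * (∫ z, (inner ℂ x z : ℂ) * (starRingEnd ℂ) (inner ℂ y z : ℂ) ∂m).re)
    ∧ ((∫ z, (inner ℂ x z : ℂ).im * (inner ℂ y z : ℂ).re ∂m)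
        = - ∫ z, (inner ℂ x z : ℂ).re * (inner ℂ y z : ℂ).im ∂m)
    ∧ ((∫ z, (inner ℂ x z : ℂ).im * (inner ℂ y z : ℂ).re ∂m)
        = (1 / 2) * (∫ z, (inner ℂ x z : ℂ) * (starRingEnd ℂ) (inner ℂ y z : ℂ) ∂m).im) := by
  have hsmul : Measurable fun z : H => (Complex.I : ℂ) • z :=
    (continuous_const_smul _).measurable
  -- change of variables under the rotation z ↦ I • z
  have key : ∀ f : H → ℝ, AEStronglyMeasurable f m →
      ∫ z, f ((Complex.I : ℂ) • z) ∂m = ∫ z, f z ∂m := by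
    intro f hf
    conv_rhs => rw [← hinv]
    rw [integral_map hsmul.aemeasurable (by rwa [hinv])]
  -- L² facts
  have hxr : MemLp (fun z => (inner ℂ x z : ℂ).re) 2 m := (hL2 x).re
  have hxi : MemLp (fun z => (inner ℂ x z : ℂ).im) 2 m := (hL2 x).im
  have hyr : MemLp (fun z => (inner ℂ y z : ℂ).re) 2 m := (hL2 y).re
  have hyi : MemLp (fun z => (inner ℂ y z : ℂ).im) 2 m := (hL2 y).im
  have hmul : ∀ f g : H → ℝ, MemLp f 2 m → MemLp g 2 m →
      Integrable (fun z => f z * g z) m := by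
    intro f g hf hg
    have : MemLp (f • g) 1 m :=
      hg.smul hf (hpqr := ⟨by simp only [one_div, ENNReal.inv_two_add_inv_two, inv_one]⟩)
    exact memLp_one_iff_integrable.mp this
  have hrr := hmul _ _ hxr hyr
  have hii := hmul _ _ hxi hyi
  have hir := hmul _ _ hxi hyr
  have hri := hmul _ _ hxr hyi
  -- integrability of the complex product
  have hconj : MemLp (fun z => (starRingEnd ℂ) (inner ℂ y z : ℂ)) 2 m :=
    (hL2 y).of_le ((RCLike.continuous_conj (K := ℂ)).comp_aestronglyMeasurable (hL2 y).1)
      (Filter.Eventually.of_forall fun z => le_of_eq (RCLike.norm_conj _))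
  have hprod : Integrable (fun z => (inner ℂ x z : ℂ) * (starRingEnd ℂ) (inner ℂ y z : ℂ)) m := by
    have : MemLp ((fun z : H => (inner ℂ x z : ℂ)) •
        fun z => (starRingEnd ℂ) (inner ℂ y z : ℂ)) 1 m :=
      hconj.smul (hL2 x) (hpqr := ⟨by simp only [one_div, ENNReal.inv_two_add_inv_two, inv_one]⟩)
    exact memLp_one_iff_integrable.mp this
  -- rotation: ⟨x, I•z⟩ = I * ⟨x,z⟩
  have hrot : ∀ (w : H) (z : H), (inner ℂ w ((Complex.I : ℂ) • z) : ℂ) =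
      Complex.I * (inner ℂ w z : ℂ) := by
    intro w z
    rw [inner_smul_right]
  -- first identity: ∫ Re·Re = ∫ Im·Im
  have e1 : ∫ z, (inner ℂ x z : ℂ).re * (inner ℂ y z : ℂ).re ∂m
      = ∫ z, (inner ℂ x z : ℂ).im * (inner ℂ y z : ℂ).im ∂m := by
    rw [← key (fun z => (inner ℂ x z : ℂ).im * (inner ℂ y z : ℂ).im) hii.1]
    apply integral_congr_ae
    filter_upwards with z
    simp only [hrot, Complex.mul_im, Complex.mul_re, Complex.I_re, Complex.I_im]
    ring
  -- second rotation identity: ∫ Im·Re = - ∫ Re·Im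
  have e2 : ∫ z, (inner ℂ x z : ℂ).im * (inner ℂ y z : ℂ).re ∂m
      = - ∫ z, (inner ℂ x z : ℂ).re * (inner ℂ y z : ℂ).im ∂m := by
    rw [← key (fun z => (inner ℂ x z : ℂ).im * (inner ℂ y z : ℂ).re) hir.1, ← integral_neg]
    apply integral_congr_ae
    filter_upwards with z
    simp only [hrot, Complex.mul_im, Complex.mul_re, Complex.I_re, Complex.I_im]
    ring
  -- real part of the complex integral
  have hre : (∫ z, (inner ℂ x z : ℂ) * (starRingEnd ℂ) (inner ℂ y z : ℂ) ∂m).re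
      = ∫ z, ((inner ℂ x z : ℂ).re * (inner ℂ y z : ℂ).re
          + (inner ℂ x z : ℂ).im * (inner ℂ y z : ℂ).im) ∂m := by
    have h := integral_re hprod
    simp only [RCLike.re_to_complex] at h
    rw [← h]
    apply integral_congr_ae
    filter_upwards with z
    simp only [Complex.mul_re, Complex.conj_re, Complex.conj_im]
    ring
  have him : (∫ z, (inner ℂ x z : ℂ) * (starRingEnd ℂ) (inner ℂ y z : ℂ) ∂m).im
      = ∫ z, ((inner ℂ x z : ℂ).im * (inner ℂ y z : ℂ).re
          - (inner ℂ x z : ℂ).re * (inner ℂ y z : ℂ).im) ∂m := by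
    have h := integral_im hprod
    simp only [RCLike.im_to_complex] at h
    rw [← h]
    apply integral_congr_ae
    filter_upwards with z
    simp only [Complex.mul_im, Complex.conj_re, Complex.conj_im]
    ring
  refine ⟨e1, ?_, e2, ?_⟩
  · rw [hre, integral_add hrr hii, ← e1]; ring
  · rw [him, integral_sub hir hri, e2]; ring
end

section
/- Let H be a separable complex Hilbert space with orthonormal basis (e_k)_{k≥1} and inner product conjugate-linear in the first variable, and let E : 𝕋 → H be a bounded Bochner-measurable map such that the scalar functions λ ↦ ⟨e_k, E(λ)⟩ are pairwise orthogonal in L²(𝕋, μ) and ∫_𝕋 |⟨e_k, E(λ)⟩|² dμ(λ) = 2σ_k² with σ_k > 0 for every k. Then for every integer n ≥ 1, Σ_{k=1}^∞ (1/(2σ_k²)) · ‖ ∫_𝕋 λ^n · conj(⟨e_k, E(λ)⟩) · E(λ) dμ(λ) ‖² ≤ ‖E‖₂², where ‖E‖₂² := ∫_𝕋 ‖E(λ)‖² dμ(λ) and the inner integrals are Bochner integrals in H. -/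
open MeasureTheory
open scoped Real


lemma integral_nu_eq {V : Type*} [NormedAddCommGroup V] [NormedSpace ℝ V]
    (g : ℝ → V) :
    ∫ θ, g θ ∂((ENNReal.ofReal (2*π)⁻¹) • (volume.restrict (Set.Ioc (0:ℝ) (2*π))))
      = (2*π)⁻¹ • ∫ θ in (0:ℝ)..(2*π), g θ := by
  rw [integral_smul_measure, ENNReal.toReal_ofReal (by positivity),
    intervalIntegral.integral_of_le Real.two_pi_pos.le]

lemma parseval_sq {H : Type*} [NormedAddCommGroup H] [InnerProductSpace ℂ H] [CompleteSpace H]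
    (e : HilbertBasis ℕ ℂ H) (x : H) :
    ∑' j, ‖(inner ℂ (e j) x : ℂ)‖ ^ 2 = ‖x‖ ^ 2 := by
  have h := e.hasSum_inner_mul_inner x x
  have h2 : ∀ i, (inner ℂ x (e i) : ℂ) * (inner ℂ (e i) x : ℂ)
      = ((‖(inner ℂ (e i) x : ℂ)‖ ^ 2 : ℝ) : ℂ) := by
    intro i
    rw [← inner_conj_symm x (e i)]
    rw [Complex.sq_norm, Complex.normSq_eq_conj_mul_self, inner_conj_symm]
  simp_rw [h2] at h
  have h3 := h.mapL Complex.reCLM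
  simp only [Complex.reCLM_apply, Complex.ofReal_re] at h3
  have h4 : (inner ℂ x x : ℂ).re = ‖x‖ ^ 2 := by
    simpa using (norm_sq_eq_re_inner (𝕜 := ℂ) x).symm
  rw [h4] at h3
  exact h3.tsum_eq

theorem core_bessel {H : Type*} [NormedAddCommGroup H] [InnerProductSpace ℂ H]
    [CompleteSpace H] [MeasurableSpace H] [BorelSpace H] [SecondCountableTopology H]
    (e : HilbertBasis ℕ ℂ H)
    (ν : Measure ℝ) [IsFiniteMeasure ν]
    (F : ℝ → H) (hFm : Measurable F) (B : ℝ) (hFB : ∀ θ, ‖F θ‖ ≤ B)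
    (Λ : ℝ → ℂ) (hΛm : Measurable Λ) (hΛ1 : ∀ θ, ‖Λ θ‖ = 1)
    (σ : ℕ → ℝ) (hσ : ∀ k, 0 < σ k)
    (horth : ∀ k l, k ≠ l →
      ∫ θ, (inner ℂ (e k) (F θ) : ℂ) * (starRingEnd ℂ) (inner ℂ (e l) (F θ) : ℂ) ∂ν = 0)
    (hnorm : ∀ k, ∫ θ, ‖(inner ℂ (e k) (F θ) : ℂ)‖ ^ 2 ∂ν = 2 * σ k ^ 2)
    (n : ℕ) :
    ∑' k, (1 / (2 * σ k ^ 2)) *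
        ‖∫ θ, ((Λ θ) ^ n * (starRingEnd ℂ) (inner ℂ (e k) (F θ) : ℂ)) • F θ ∂ν‖ ^ 2
      ≤ ∫ θ, ‖F θ‖ ^ 2 ∂ν := by
  classical
  have hB0 : 0 ≤ B := le_trans (norm_nonneg _) (hFB 0)
  set f : ℕ → ℝ → ℂ := fun k θ => (inner ℂ (e k) (F θ) : ℂ) with hfdef
  have hfm : ∀ k, Measurable (f k) := fun k => measurable_const.inner hFm
  have hfB : ∀ k θ, ‖f k θ‖ ≤ B := by
    intro k θ
    calc ‖f k θ‖ ≤ ‖(e k : H)‖ * ‖F θ‖ := norm_inner_le_norm _ _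
    _ = ‖F θ‖ := by rw [e.orthonormal.1 k, one_mul]
    _ ≤ B := hFB θ
  have hΛn : ∀ θ, (Λ θ) ^ n * (starRingEnd ℂ) ((Λ θ) ^ n) = 1 := by
    intro θ
    rw [map_pow, ← mul_pow, Complex.mul_conj, Complex.normSq_eq_norm_sq, hΛ1, one_pow,
      Complex.ofReal_one, one_pow]
  have hΛnorm : ∀ θ, ‖(Λ θ) ^ n‖ = 1 := by
    intro θ
    rw [norm_pow, hΛ1, one_pow]
  -- constants
  set c : ℕ → ℝ := fun k => (σ k * Real.sqrt 2)⁻¹ with hcdef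
  have hc0 : ∀ k, 0 < c k := fun k => inv_pos.2 (mul_pos (hσ k) (by positivity))
  have hcsq : ∀ k, (c k) ^ 2 * (2 * σ k ^ 2) = 1 := by
    intro k
    have h1 : (σ k * Real.sqrt 2) ^ 2 = 2 * σ k ^ 2 := by
      rw [mul_pow, Real.sq_sqrt (by norm_num : (0:ℝ) ≤ 2)]; ring
    have h3 : (0:ℝ) < 2 * σ k ^ 2 := by have := hσ k; positivity
    rw [hcdef]
    simp only [inv_pow]
    rw [h1]
    exact inv_mul_cancel₀ h3.ne'
  have hcsq' : ∀ k, (c k) ^ 2 = 1 / (2 * σ k ^ 2) := by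
    intro k
    have h2 : (0:ℝ) < 2 * σ k ^ 2 := by
      have := hσ k; positivity
    rw [eq_div_iff h2.ne']
    linarith [hcsq k]
  -- the scalar coefficient functions
  set a : ℕ → ℝ → ℂ := fun k θ =>
    (c k : ℂ) * (starRingEnd ℂ) ((Λ θ) ^ n * (starRingEnd ℂ) (f k θ)) with hadef
  have hconjm : ∀ (g : ℝ → ℂ), Measurable g → Measurable (fun θ => (starRingEnd ℂ) (g θ)) :=
    fun g hg => (continuous_star.measurable).comp hg
  have ham : ∀ k, Measurable (a k) :=
    fun k => measurable_const.mul (hconjm _ ((hΛm.pow_const n).mul (hconjm _ (hfm k))))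
  have haB : ∀ k θ, ‖a k θ‖ ≤ c k * B := by
    intro k θ
    rw [hadef]
    simp only [norm_mul, RCLike.norm_conj, Complex.norm_real, Real.norm_eq_abs,
      abs_of_pos (hc0 k), hΛnorm θ, one_mul]
    exact mul_le_mul_of_nonneg_left (hfB k θ) (hc0 k).le
  -- the orthonormal family in L²(ν; H)
  set ω : ℕ × ℕ → ℝ → H := fun p θ => a p.1 θ • (e p.2 : H) with hωdef
  have hωm : ∀ p, Measurable (ω p) := by
    intro p
    exact ((continuous_id.smul (continuous_const : Continuous fun _ : ℂ => (e p.2 : H))).measurable).comp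
      (ham p.1)
  have hω2 : ∀ p, MemLp (ω p) 2 ν := by
    intro p
    refine MemLp.of_bound (hωm p).aestronglyMeasurable (c p.1 * B) (.of_forall fun θ => ?_)
    rw [hωdef]
    simp only [norm_smul]
    rw [e.orthonormal.1 p.2, mul_one]
    exact haB p.1 θ
  have hF2 : MemLp F 2 ν :=
    MemLp.of_bound hFm.aestronglyMeasurable B (.of_forall hFB)
  set G : ℕ × ℕ → Lp H 2 ν := fun p => (hω2 p).toLp (ω p) with hGdef
  set EL : Lp H 2 ν := hF2.toLp F with hELdef
  -- integrability helpers
  have hIntC : ∀ (g : ℝ → ℂ), Measurable g → ∀ C : ℝ, (∀ θ, ‖g θ‖ ≤ C) → Integrable g ν :=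
    fun g hg C hC => memLp_one_iff_integrable.mp
      (MemLp.of_bound hg.aestronglyMeasurable C (.of_forall hC))
  have hIntH : ∀ (g : ℝ → H), Measurable g → ∀ C : ℝ, (∀ θ, ‖g θ‖ ≤ C) → Integrable g ν :=
    fun g hg C hC => memLp_one_iff_integrable.mp
      (MemLp.of_bound hg.aestronglyMeasurable C (.of_forall hC))
  -- the vectors v k
  set v : ℕ → H := fun k => ∫ θ, ((Λ θ) ^ n * (starRingEnd ℂ) (f k θ)) • F θ ∂ν with hvdef
  have hvm : ∀ k, Measurable (fun θ => ((Λ θ) ^ n * (starRingEnd ℂ) (f k θ)) • F θ) := by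
    intro k
    exact (continuous_smul.measurable).comp (((hΛm.pow_const n).mul (hconjm _ (hfm k))).prodMk hFm)
  have hvInt : ∀ k, Integrable (fun θ => ((Λ θ) ^ n * (starRingEnd ℂ) (f k θ)) • F θ) ν := by
    intro k
    refine hIntH _ (hvm k) (B * B) fun θ => ?_
    rw [norm_smul, norm_mul, hΛnorm θ, one_mul, RCLike.norm_conj]
    exact mul_le_mul (hfB k θ) (hFB θ) (norm_nonneg _) hB0
  have hIntR : ∀ (g : ℝ → ℝ), Measurable g → ∀ C : ℝ, (∀ θ, ‖g θ‖ ≤ C) → Integrable g ν :=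
    fun g hg C hC => memLp_one_iff_integrable.mp
      (MemLp.of_bound hg.aestronglyMeasurable C (.of_forall hC))
  have hoR : ∀ (g : ℝ → ℝ), Integrable g ν →
      ∫ θ, ((g θ : ℝ) : ℂ) ∂ν = ((∫ θ, g θ ∂ν : ℝ) : ℂ) := by
    intro g hg
    simpa using (ContinuousLinearMap.integral_comp_comm Complex.ofRealCLM hg)
  have habsInt : ∀ k, Integrable (fun θ => ‖f k θ‖ ^ 2) ν := by
    intro k
    refine hIntR _ (((hfm k).norm).pow_const 2) (B ^ 2) fun θ => ?_
    rw [Real.norm_eq_abs, abs_of_nonneg (by positivity)]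
    exact pow_le_pow_left₀ (norm_nonneg _) (hfB k θ) 2
  -- conjugation identity
  have hconj : ∀ k l θ, (starRingEnd ℂ) (a k θ) * a l θ
      = ((c k * c l : ℝ) : ℂ) * (f l θ * (starRingEnd ℂ) (f k θ)) := by
    intro k l θ
    simp only [hadef, map_mul, Complex.conj_conj, Complex.conj_ofReal, Complex.ofReal_mul]
    linear_combination ((c k : ℂ) * (c l : ℂ) * (starRingEnd ℂ) (f k θ) * f l θ) * hΛn θ
  -- inner products of the G family
  have hGG : ∀ p q : ℕ × ℕ, (inner ℂ (G p) (G q) : ℂ) = if p = q then 1 else 0 := by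
    rintro ⟨k, j⟩ ⟨l, m⟩
    rw [hGdef]
    rw [L2.inner_def]
    have hae : (fun θ => (inner ℂ (((hω2 (k, j)).toLp (ω (k, j))) θ) (((hω2 (l, m)).toLp (ω (l, m))) θ) : ℂ))
        =ᵐ[ν] fun θ => (inner ℂ (ω (k, j) θ) (ω (l, m) θ) : ℂ) := by
      filter_upwards [(hω2 (k, j)).coeFn_toLp, (hω2 (l, m)).coeFn_toLp] with θ h1 h2
      rw [h1, h2]
    rw [integral_congr_ae hae]
    have hin : ∀ θ, (inner ℂ (ω (k, j) θ) (ω (l, m) θ) : ℂ)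
        = ((c k * c l : ℝ) : ℂ) * (f l θ * (starRingEnd ℂ) (f k θ))
            * (inner ℂ (e j : H) (e m : H) : ℂ) := by
      intro θ
      rw [hωdef]
      simp only [inner_smul_left, inner_smul_right]
      rw [← hconj k l θ]; ring
    simp_rw [hin]
    rcases eq_or_ne j m with rfl | hjm
    · simp_rw [inner_self_eq_norm_sq_to_K (𝕜 := ℂ) (e j : H), e.orthonormal.1 j]
      push_cast
      simp only [one_pow, mul_one]
      rw [integral_const_mul]
      rcases eq_or_ne k l with rfl | hkl
      · have hmc : ∀ θ, f k θ * (starRingEnd ℂ) (f k θ)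
            = ((‖f k θ‖ ^ 2 : ℝ) : ℂ) := by
          intro θ
          rw [Complex.mul_conj, Complex.normSq_eq_norm_sq]
        simp_rw [hmc]
        rw [hoR _ (habsInt k), hnorm k, if_pos trivial,
          ← Complex.ofReal_mul, ← Complex.ofReal_mul]
        norm_cast
        linear_combination hcsq k
      · rw [horth l k (Ne.symm hkl)]
        rw [if_neg (by simp [hkl]), mul_zero]
    · simp_rw [orthonormal_iff_ite.mp e.orthonormal j m, if_neg hjm, mul_zero, integral_zero]
      rw [if_neg (by simp [hjm])]
  have hGorth : Orthonormal ℂ G := orthonormal_iff_ite.mpr hGG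
  -- inner products with EL
  have hGE : ∀ k j, (inner ℂ (G (k, j)) EL : ℂ) = (inner ℂ (e j : H) ((c k : ℂ) • v k) : ℂ) := by
    intro k j
    rw [hGdef, hELdef, L2.inner_def]
    have hae : (fun θ => (inner ℂ (((hω2 (k, j)).toLp (ω (k, j))) θ) ((hF2.toLp F) θ) : ℂ))
        =ᵐ[ν] fun θ => (inner ℂ (ω (k, j) θ) (F θ) : ℂ) := by
      filter_upwards [(hω2 (k, j)).coeFn_toLp, hF2.coeFn_toLp] with θ h1 h2
      rw [h1, h2]
    rw [integral_congr_ae hae]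
    have hin : ∀ θ, (inner ℂ (ω (k, j) θ) (F θ) : ℂ)
        = (c k : ℂ) * (inner ℂ (e j : H) (((Λ θ) ^ n * (starRingEnd ℂ) (f k θ)) • F θ) : ℂ) := by
      intro θ
      rw [hωdef]
      simp only [inner_smul_left, inner_smul_right, hadef, map_mul, Complex.conj_conj,
        Complex.conj_ofReal]
      ring
    simp_rw [hin]
    rw [integral_const_mul, integral_inner (hvInt k), hvdef, inner_smul_right]
  -- Bessel
  have hbessel := hGorth.tsum_inner_products_le EL
  have hsum : Summable fun p : ℕ × ℕ => ‖(inner ℂ (G p) EL : ℂ)‖ ^ 2 :=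
    hGorth.inner_products_summable EL
  have hELnorm : ‖EL‖ ^ 2 = ∫ θ, ‖F θ‖ ^ 2 ∂ν := by
    have h1 : (inner ℂ EL EL : ℂ) = ∫ θ, (inner ℂ (F θ) (F θ) : ℂ) ∂ν := by
      rw [hELdef, L2.inner_def]
      refine integral_congr_ae ?_
      filter_upwards [hF2.coeFn_toLp] with θ h
      rw [h]
    have h2 : ∀ θ, (inner ℂ (F θ) (F θ) : ℂ) = ((‖F θ‖ ^ 2 : ℝ) : ℂ) := by
      intro θ
      rw [inner_self_eq_norm_sq_to_K]
      norm_cast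
    have hFnInt : Integrable (fun θ => ‖F θ‖ ^ 2) ν := by
      refine hIntR _ ((hFm.norm).pow_const 2) (B ^ 2) fun θ => ?_
      rw [Real.norm_eq_abs, abs_of_nonneg (by positivity)]
      exact pow_le_pow_left₀ (norm_nonneg _) (hFB θ) 2
    rw [norm_sq_eq_re_inner (𝕜 := ℂ) EL, h1]
    simp_rw [h2]
    rw [hoR _ hFnInt]
    simp
  -- putting it together
  have hterm : ∀ k, (1 / (2 * σ k ^ 2)) * ‖v k‖ ^ 2
      = ∑' j, ‖(inner ℂ (G (k, j)) EL : ℂ)‖ ^ 2 := by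
    intro k
    calc (1 / (2 * σ k ^ 2)) * ‖v k‖ ^ 2 = ‖(c k : ℂ) • v k‖ ^ 2 := by
          rw [norm_smul, Complex.norm_real, Real.norm_eq_abs, abs_of_pos (hc0 k), mul_pow,
            hcsq' k]
    _ = ∑' j, ‖(inner ℂ (e j : H) ((c k : ℂ) • v k) : ℂ)‖ ^ 2 := (parseval_sq e _).symm
    _ = ∑' j, ‖(inner ℂ (G (k, j)) EL : ℂ)‖ ^ 2 := by
          refine tsum_congr fun j => ?_
          rw [hGE k j]
  calc ∑' k, (1 / (2 * σ k ^ 2)) * ‖v k‖ ^ 2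
      = ∑' k, ∑' j, ‖(inner ℂ (G (k, j)) EL : ℂ)‖ ^ 2 := tsum_congr hterm
    _ = ∑' p : ℕ × ℕ, ‖(inner ℂ (G p) EL : ℂ)‖ ^ 2 := (hsum.tsum_prod' fun k => hsum.prod_factor k).symm
    _ ≤ ‖EL‖ ^ 2 := hbessel
    _ = ∫ θ, ‖F θ‖ ^ 2 ∂ν := hELnorm

/-- Lemma 5.4: if the scalar functions `λ ↦ ⟨e_k, E(λ)⟩` are pairwise orthogonal in `L²(𝕋,μ)`
with `∫_𝕋 |⟨e_k,E(λ)⟩|² dμ = 2σ_k²`, then for every `n ≥ 1`,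
`Σ_k (1/(2σ_k²)) ‖∫_𝕋 λⁿ conj⟨e_k,E(λ)⟩ E(λ) dμ(λ)‖² ≤ ‖E‖₂²`
(that is, `Σ_k σ_k² ‖Tⁿ e_k‖² ≤ ‖E‖₂²/2`). -/
theorem stmt6 {H : Type*} [NormedAddCommGroup H] [InnerProductSpace ℂ H] [CompleteSpace H]
    (e : HilbertBasis ℕ ℂ H) (E : ℂ → H) (σ : ℕ → ℝ)
    [MeasurableSpace H] [BorelSpace H]
    (hmeas : Measurable fun θ : ℝ => E (Complex.exp (θ * Complex.I)))
    (hbdd : ∃ B : ℝ, ∀ z : ℂ, ‖z‖ = 1 → ‖E z‖ ≤ B)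
    (hσ : ∀ k, 0 < σ k)
    (horth : ∀ k l : ℕ, k ≠ l →
      (((2 * π : ℝ)) : ℂ)⁻¹ * ∫ θ in (0 : ℝ)..(2 * π),
          (inner ℂ (e k) (E (Complex.exp (θ * Complex.I))) : ℂ)
            * (starRingEnd ℂ) (inner ℂ (e l) (E (Complex.exp (θ * Complex.I))) : ℂ) = 0)
    (hnorm : ∀ k : ℕ,
      (2 * π)⁻¹ * ∫ θ in (0 : ℝ)..(2 * π),
          (‖inner ℂ (e k) (E (Complex.exp (θ * Complex.I)))‖ : ℂ) ^ 2
        = 2 * σ k ^ 2)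
    (n : ℕ) (hn : 1 ≤ n) :
    ∑' k : ℕ, (1 / (2 * σ k ^ 2)) * ‖(2 * π)⁻¹ • ∫ θ in (0 : ℝ)..(2 * π),
        ((Complex.exp (θ * Complex.I)) ^ n
            * (starRingEnd ℂ) (inner ℂ (e k) (E (Complex.exp (θ * Complex.I))) : ℂ))
          • E (Complex.exp (θ * Complex.I))‖ ^ 2
      ≤ (2 * π)⁻¹ * ∫ θ in (0 : ℝ)..(2 * π), ‖E (Complex.exp (θ * Complex.I))‖ ^ 2 := by

  classical
  obtain ⟨B, hB⟩ := hbdd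
  -- separability and second countability of `H`
  haveI : SecondCountableTopology H := by
    have h1 : TopologicalSpace.IsSeparable (Set.range (e : ℕ → H)) :=
      (Set.countable_range _).isSeparable
    have h2 := (h1.span (R := ℂ)).closure
    rw [← Submodule.topologicalClosure_coe, e.dense_span, Submodule.top_coe] at h2
    haveI : TopologicalSpace.SeparableSpace H := TopologicalSpace.isSeparable_univ_iff.1 h2
    exact UniformSpace.secondCountable_of_separable H
  set ν : Measure ℝ := (ENNReal.ofReal (2*π)⁻¹) • (volume.restrict (Set.Ioc (0:ℝ) (2*π)))
    with hνdef
  haveI : IsFiniteMeasure ν := by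
    constructor
    rw [hνdef, Measure.smul_apply, Measure.restrict_apply MeasurableSet.univ, Set.univ_inter,
      Real.volume_Ioc, smul_eq_mul]
    exact ENNReal.mul_lt_top ENNReal.ofReal_lt_top ENNReal.ofReal_lt_top
  have habs : ∀ θ : ℝ, ‖Complex.exp (θ * Complex.I)‖ = 1 := by
    intro θ
    simp [Complex.norm_exp]
  have hΛm : Measurable fun θ : ℝ => Complex.exp (θ * Complex.I) :=
    Complex.continuous_exp.measurable.comp (Complex.measurable_ofReal.mul_const Complex.I)
  have hFB : ∀ θ : ℝ, ‖E (Complex.exp (θ * Complex.I))‖ ≤ B := fun θ => hB _ (habs θ)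
  have horth' : ∀ k l, k ≠ l →
      ∫ θ, (inner ℂ (e k) (E (Complex.exp (θ * Complex.I))) : ℂ)
        * (starRingEnd ℂ) (inner ℂ (e l) (E (Complex.exp (θ * Complex.I))) : ℂ) ∂ν = 0 := by
    intro k l hkl
    rw [hνdef, integral_nu_eq, Complex.real_smul, Complex.ofReal_inv]
    exact horth k l hkl
  have hnorm' : ∀ k,
      ∫ θ, ‖(inner ℂ (e k) (E (Complex.exp (θ * Complex.I))) : ℂ)‖ ^ 2 ∂ν
        = 2 * σ k ^ 2 := by
    intro k
    rw [hνdef, integral_nu_eq, smul_eq_mul]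
    apply Complex.ofReal_injective
    rw [Complex.ofReal_mul, ← intervalIntegral.integral_ofReal]
    push_cast
    have := hnorm k
    push_cast at this
    exact this
  have h := core_bessel e ν (fun θ => E (Complex.exp (θ * Complex.I))) hmeas B hFB
    (fun θ => Complex.exp (θ * Complex.I)) hΛm habs σ hσ horth' hnorm' n
  simp only [hνdef, integral_nu_eq, smul_eq_mul] at h
  exact h
end

section
/- Let (Ω, 𝓕, P) be a probability space and let (Y_j)_{j≥1} be an independent sequence of nonnegative random variables such that for every j and every positive integer i, Y_j^i is integrable and E[Y_j^i] = i!·(E[Y_j])^i. Assume S := Σ_{j=1}^∞ E[Y_j] < ∞. Then for every positive integer k, E[(Σ_{j=1}^∞ Y_j)^k] ≤ k!·S^k. -/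
open MeasureTheory

open scoped ENNReal

/-- Expectation of a product of independent nonnegative (ENNReal) random variables. -/
private lemma lintegral_prod_of_iIndep {Ω : Type*} [MeasurableSpace Ω] (P : Measure Ω)
    [IsProbabilityMeasure P] (f : ℕ → Ω → ℝ≥0∞) (hmeas : ∀ j, Measurable (f j))
    (hindep : ProbabilityTheory.iIndepFun f P) (s : Finset ℕ) :
    ∫⁻ ω, ∏ j ∈ s, f j ω ∂P = ∏ j ∈ s, ∫⁻ ω, f j ω ∂P := by
  classical
  induction s using Finset.induction with
  | empty => simp
  | @insert a s ha ih =>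
    have hmul : ProbabilityTheory.IndepFun (f a) (∏ j ∈ s, f j) P :=
      (hindep.indepFun_finsetProd_of_notMem hmeas ha).symm
    have hprodmeas : Measurable (∏ j ∈ s, f j) := by
      rw [Finset.prod_fn]; exact Finset.measurable_prod s fun j _ => hmeas j
    calc ∫⁻ ω, ∏ j ∈ insert a s, f j ω ∂P
        = ∫⁻ ω, (f a * ∏ j ∈ s, f j) ω ∂P := by
          simp [Finset.prod_insert ha, Finset.prod_apply]
      _ = (∫⁻ ω, f a ω ∂P) * ∫⁻ ω, (∏ j ∈ s, f j) ω ∂P :=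
          ProbabilityTheory.lintegral_mul_eq_lintegral_mul_lintegral_of_indepFun
            (hmeas a) hprodmeas hmul
      _ = ∏ j ∈ insert a s, ∫⁻ ω, f j ω ∂P := by
          simp only [Finset.prod_insert ha, Finset.prod_apply, ih]

/-- Abstract form of Proposition 5.5 (moments of the Gaussian measure): if `(Y_j)` is an
independent sequence of nonnegative random variables with `E[Y_j^i] = i!·(E[Y_j])^i` and
`S = Σ_j E[Y_j] < ∞`, then `E[(Σ_j Y_j)^k] ≤ k!·S^k` for every `k ≥ 1`. -/
theorem stmt7 {Ω : Type*} [MeasurableSpace Ω] (P : Measure Ω) [IsProbabilityMeasure P]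
    (Y : ℕ → Ω → ℝ) (hmeas : ∀ j, Measurable (Y j))
    (hindep : ProbabilityTheory.iIndepFun Y P)
    (hpos : ∀ j ω, 0 ≤ Y j ω)
    (hint : ∀ j (i : ℕ), 1 ≤ i → Integrable (fun ω => (Y j ω) ^ i) P)
    (hmom : ∀ j (i : ℕ), 1 ≤ i →
      ∫ ω, (Y j ω) ^ i ∂P = (i.factorial : ℝ) * (∫ ω, Y j ω ∂P) ^ i)
    (hsum : Summable fun j => ∫ ω, Y j ω ∂P)
    (k : ℕ) (hk : 1 ≤ k) :
    ∫ ω, (∑' j, Y j ω) ^ k ∂P ≤ (k.factorial : ℝ) * (∑' j, ∫ ω, Y j ω ∂P) ^ k := by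
  classical
  have hk0 : k ≠ 0 := by omega
  set μ : ℕ → ℝ := fun j => ∫ ω, Y j ω ∂P with hμ
  have hμnn : ∀ j, 0 ≤ μ j := fun j => integral_nonneg (fun ω => hpos j ω)
  have hSnn : 0 ≤ ∑' j, μ j := tsum_nonneg hμnn
  have hgmeas : ∀ j, Measurable (fun ω => ENNReal.ofReal (Y j ω)) :=
    fun j => (hmeas j).ennreal_ofReal
  have hgind : ProbabilityTheory.iIndepFun
      (fun j ω => ENNReal.ofReal (Y j ω)) P :=
    hindep.comp (fun _ => ENNReal.ofReal) fun _ => ENNReal.measurable_ofReal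
  -- moments of the lifted variables
  have hgmom : ∀ j i, ∫⁻ ω, (ENNReal.ofReal (Y j ω)) ^ i ∂P
      = (i.factorial : ℝ≥0∞) * ENNReal.ofReal (μ j) ^ i := by
    intro j i
    rcases Nat.eq_zero_or_pos i with hi | hi
    · subst hi; simp
    · have h1 : ∀ ω, (ENNReal.ofReal (Y j ω)) ^ i = ENNReal.ofReal ((Y j ω) ^ i) := fun ω =>
        (ENNReal.ofReal_pow (hpos j ω) i).symm
      simp_rw [h1]
      rw [← ofReal_integral_eq_lintegral_ofReal (hint j i hi)
          (Filter.Eventually.of_forall fun ω => pow_nonneg (hpos j ω) i),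
        hmom j i hi, ENNReal.ofReal_mul (by positivity),
        ENNReal.ofReal_natCast, ENNReal.ofReal_pow (hμnn j)]
  -- the key finite estimate
  have hkey : ∀ s : Finset ℕ, ∫⁻ ω, (∑ j ∈ s, ENNReal.ofReal (Y j ω)) ^ k ∂P
      ≤ (k.factorial : ℝ≥0∞) * ENNReal.ofReal (∑' j, μ j) ^ k := by
    intro s
    have hpm : ∀ (ℓ : ℕ → ℕ), Measurable fun ω => ∏ j ∈ s, (ENNReal.ofReal (Y j ω)) ^ ℓ j :=
      fun ℓ => Finset.measurable_prod s fun j _ => (hgmeas j).pow_const (ℓ j)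
    have hstep : ∫⁻ ω, (∑ j ∈ s, ENNReal.ofReal (Y j ω)) ^ k ∂P
        = ∑ ℓ ∈ Finset.piAntidiag s k, (Nat.multinomial s ℓ : ℝ≥0∞)
            * ∏ j ∈ s, ((ℓ j).factorial : ℝ≥0∞) * ENNReal.ofReal (μ j) ^ ℓ j := by
      have hexp : ∀ ω : Ω, (∑ j ∈ s, ENNReal.ofReal (Y j ω)) ^ k
          = ∑ ℓ ∈ Finset.piAntidiag s k, (Nat.multinomial s ℓ : ℝ≥0∞)
              * ∏ j ∈ s, (ENNReal.ofReal (Y j ω)) ^ ℓ j :=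
        fun ω => Finset.sum_pow_eq_sum_piAntidiag s (fun j => ENNReal.ofReal (Y j ω)) k
      simp_rw [hexp]
      rw [lintegral_finset_sum _ (fun ℓ _ => (hpm ℓ).const_mul _)]
      refine Finset.sum_congr rfl fun ℓ _ => ?_
      rw [lintegral_const_mul _ (hpm ℓ),
        lintegral_prod_of_iIndep P (fun j ω => (ENNReal.ofReal (Y j ω)) ^ ℓ j)
          (fun j => (hgmeas j).pow_const (ℓ j))
          (hgind.comp (fun j x => x ^ ℓ j) (fun j => measurable_id.pow_const (ℓ j)))]
      exact congrArg _ (Finset.prod_congr rfl fun j _ => hgmom j (ℓ j))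
    rw [hstep]
    have hterm : ∀ ℓ ∈ Finset.piAntidiag s k,
        (Nat.multinomial s ℓ : ℝ≥0∞) * ∏ j ∈ s, ((ℓ j).factorial : ℝ≥0∞)
            * ENNReal.ofReal (μ j) ^ ℓ j
        ≤ (k.factorial : ℝ≥0∞) * ((Nat.multinomial s ℓ : ℝ≥0∞)
            * ∏ j ∈ s, ENNReal.ofReal (μ j) ^ ℓ j) := by
      intro ℓ hℓ
      obtain ⟨hsumℓ, -⟩ := Finset.mem_piAntidiag.1 hℓ
      have hfact : (Nat.multinomial s ℓ : ℝ≥0∞) * ∏ j ∈ s, ((ℓ j).factorial : ℝ≥0∞)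
          = (k.factorial : ℝ≥0∞) := by
        rw [← Nat.cast_prod, ← Nat.cast_mul, mul_comm, Nat.multinomial_spec, hsumℓ]
      calc (Nat.multinomial s ℓ : ℝ≥0∞) * ∏ j ∈ s, ((ℓ j).factorial : ℝ≥0∞)
              * ENNReal.ofReal (μ j) ^ ℓ j
          = ((Nat.multinomial s ℓ : ℝ≥0∞) * ∏ j ∈ s, ((ℓ j).factorial : ℝ≥0∞))
              * ∏ j ∈ s, ENNReal.ofReal (μ j) ^ ℓ j := by
            rw [Finset.prod_mul_distrib, mul_assoc]
        _ = (k.factorial : ℝ≥0∞) * ∏ j ∈ s, ENNReal.ofReal (μ j) ^ ℓ j := by rw [hfact]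
        _ ≤ (k.factorial : ℝ≥0∞) * ((Nat.multinomial s ℓ : ℝ≥0∞)
              * ∏ j ∈ s, ENNReal.ofReal (μ j) ^ ℓ j) := by
            rw [← mul_assoc, mul_comm (k.factorial : ℝ≥0∞) (Nat.multinomial s ℓ : ℝ≥0∞),
              mul_assoc]
            exact le_mul_of_one_le_left zero_le'
              (by exact_mod_cast Nat.one_le_cast.2 (Nat.multinomial_pos s ℓ))
    calc ∑ ℓ ∈ Finset.piAntidiag s k, (Nat.multinomial s ℓ : ℝ≥0∞)
            * ∏ j ∈ s, ((ℓ j).factorial : ℝ≥0∞) * ENNReal.ofReal (μ j) ^ ℓ j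
        ≤ ∑ ℓ ∈ Finset.piAntidiag s k, (k.factorial : ℝ≥0∞)
            * ((Nat.multinomial s ℓ : ℝ≥0∞) * ∏ j ∈ s, ENNReal.ofReal (μ j) ^ ℓ j) :=
          Finset.sum_le_sum hterm
      _ = (k.factorial : ℝ≥0∞) * (∑ j ∈ s, ENNReal.ofReal (μ j)) ^ k := by
          rw [← Finset.mul_sum, Finset.sum_pow_eq_sum_piAntidiag]
      _ ≤ (k.factorial : ℝ≥0∞) * ENNReal.ofReal (∑' j, μ j) ^ k := by
          gcongr
          rw [← ENNReal.ofReal_sum_of_nonneg (fun j _ => hμnn j)]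
          exact ENNReal.ofReal_le_ofReal (Summable.sum_le_tsum s (fun j _ => hμnn j) hsum)
  -- monotone convergence
  have hlim : ∫⁻ ω, (∑' j, ENNReal.ofReal (Y j ω)) ^ k ∂P
      ≤ (k.factorial : ℝ≥0∞) * ENNReal.ofReal (∑' j, μ j) ^ k := by
    have hpt : ∀ ω : Ω, (∑' j, ENNReal.ofReal (Y j ω)) ^ k
        = ⨆ n, (∑ j ∈ Finset.range n, ENNReal.ofReal (Y j ω)) ^ k := by
      intro ω
      rw [ENNReal.tsum_eq_iSup_nat]
      exact Monotone.map_iSup_of_continuousAt (f := fun x : ℝ≥0∞ => x ^ k)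
        ((ENNReal.continuous_pow k).continuousAt)
        (fun a b hab => pow_le_pow_left' hab k) (by simp [zero_pow hk0])
    simp_rw [hpt]
    rw [lintegral_iSup
      (fun n => (Finset.measurable_sum _ fun j _ => hgmeas j).pow_const k)
      (fun m n hmn ω => pow_le_pow_left' (Finset.sum_le_sum_of_subset
        (Finset.range_subset_range.2 hmn)) k)]
    exact iSup_le fun n => hkey _
  -- relate the real tsum to the ENNReal tsum
  have hEq : ∀ ω, ∑' j, Y j ω = (∑' j, ENNReal.ofReal (Y j ω)).toReal := by
    intro ω
    by_cases hs : Summable fun j => Y j ω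
    · rw [← ENNReal.ofReal_tsum_of_nonneg (fun j => hpos j ω) hs,
        ENNReal.toReal_ofReal (tsum_nonneg fun j => hpos j ω)]
    · rw [tsum_eq_zero_of_not_summable hs]
      have htop : ∑' j, ENNReal.ofReal (Y j ω) = ∞ := by
        by_contra h
        exact hs (by simpa [ENNReal.toReal_ofReal (hpos _ ω)]
          using ENNReal.summable_toReal h)
      rw [htop]; simp
  have hfmeas : Measurable fun ω => (∑' j, Y j ω) ^ k := by
    have h1 : Measurable fun ω => ∑' j, ENNReal.ofReal (Y j ω) :=
      Measurable.ennreal_tsum hgmeas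
    have : (fun ω => (∑' j, Y j ω) ^ k)
        = fun ω => ((∑' j, ENNReal.ofReal (Y j ω)).toReal) ^ k := by
      funext ω; rw [hEq ω]
    rw [this]
    exact h1.ennreal_toReal.pow_const k
  rw [integral_eq_lintegral_of_nonneg_ae
    (Filter.Eventually.of_forall fun ω => pow_nonneg (tsum_nonneg fun j => hpos j ω) k)
    hfmeas.aestronglyMeasurable]
  have hle : ∫⁻ ω, ENNReal.ofReal ((∑' j, Y j ω) ^ k) ∂P
      ≤ (k.factorial : ℝ≥0∞) * ENNReal.ofReal (∑' j, μ j) ^ k := by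
    refine le_trans (lintegral_mono fun ω => ?_) hlim
    by_cases hT : (∑' j, ENNReal.ofReal (Y j ω)) = ∞
    · rw [hEq ω, hT]
      simp [zero_pow hk0]
    · rw [hEq ω, ENNReal.ofReal_pow ENNReal.toReal_nonneg, ENNReal.ofReal_toReal hT]
  calc (∫⁻ ω, ENNReal.ofReal ((∑' j, Y j ω) ^ k) ∂P).toReal
      ≤ ((k.factorial : ℝ≥0∞) * ENNReal.ofReal (∑' j, μ j) ^ k).toReal :=
        ENNReal.toReal_mono
          (ENNReal.mul_ne_top (ENNReal.natCast_ne_top _)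
            (ENNReal.pow_ne_top ENNReal.ofReal_ne_top)) hle
    _ = (k.factorial : ℝ) * (∑' j, μ j) ^ k := by
        rw [ENNReal.toReal_mul, ENNReal.toReal_pow, ENNReal.toReal_ofReal hSnn]; simp
end

section
/- Let T be the Kalisch-type operator on L²([0,2π]) (with Lebesgue measure) defined by (Tf)(θ) = e^{iθ}·f(θ) − ∫_0^θ i·e^{it}·f(t) dt. For α ∈ [0,2π), let E(e^{iα}) := 1_{(α,2π)}, the indicator function of the interval (α, 2π). Then T(E(e^{iα})) = e^{iα}·E(e^{iα}) in L²([0,2π]); that is, for almost every θ ∈ [0,2π], e^{iθ}·1_{(α,2π)}(θ) − ∫_0^θ i·e^{it}·1_{(α,2π)}(t) dt = e^{iα}·1_{(α,2π)}(θ). -/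
open MeasureTheory
open scoped Real

/-- Example 2.12: for the Kalisch-type operator `(Tf)(θ) = e^{iθ}f(θ) − ∫_0^θ i e^{it} f(t) dt`
on `L²([0,2π])`, the indicator function `E(e^{iα}) = 1_{(α,2π)}` is an eigenvector associated
with the unimodular eigenvalue `e^{iα}`: for a.e. `θ ∈ [0,2π]`,
`e^{iθ}·1_{(α,2π)}(θ) − ∫_0^θ i e^{it} 1_{(α,2π)}(t) dt = e^{iα}·1_{(α,2π)}(θ)`. -/
theorem stmt11 (α : ℝ) (hα0 : 0 ≤ α) (hα2 : α < 2 * π) :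
    ∀ᵐ (θ : ℝ) ∂(volume.restrict (Set.Icc (0 : ℝ) (2 * π))),
      Complex.exp (θ * Complex.I) * Set.indicator (Set.Ioo α (2 * π)) (fun _ => (1 : ℂ)) θ
          - ∫ t in (0 : ℝ)..θ,
              Complex.I * Complex.exp (t * Complex.I)
                * Set.indicator (Set.Ioo α (2 * π)) (fun _ => (1 : ℂ)) t
        = Complex.exp (α * Complex.I)
            * Set.indicator (Set.Ioo α (2 * π)) (fun _ => (1 : ℂ)) θ := by
  set S : Set ℝ := Set.Ioo α (2 * π) with hS
  set g : ℝ → ℂ := fun t => Complex.I * Complex.exp (t * Complex.I) with hg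
  have hne : ∀ᵐ θ ∂(volume.restrict (Set.Icc (0:ℝ) (2*π))), θ ≠ 2*π := by
    refine Filter.Eventually.filter_mono (ae_mono Measure.restrict_le_self) ?_
    rw [ae_iff]
    have h' : {x : ℝ | ¬ x ≠ 2*π} = {2*π} := by ext x; simp
    rw [h']
    exact Real.volume_singleton
  have hmem := ae_restrict_mem (μ := volume) (s := Set.Icc (0:ℝ) (2*π)) measurableSet_Icc
  have hind : ∀ t : ℝ, Complex.I * Complex.exp (t * Complex.I)
      * Set.indicator S (fun _ => (1 : ℂ)) t = Set.indicator S g t := by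
    intro t
    by_cases h : t ∈ S <;> simp [h, hg]
  have hgc : Continuous g := by
    apply Continuous.mul continuous_const
    exact Complex.continuous_exp.comp (by continuity)
  have hInt : ∀ a b : ℝ, IntervalIntegrable (S.indicator g) volume a b := by
    intro a b
    have hgi : IntervalIntegrable g volume a b := hgc.intervalIntegrable a b
    exact ⟨hgi.1.indicator measurableSet_Ioo, hgi.2.indicator measurableSet_Ioo⟩
  have hzero : ∀ b : ℝ, 0 ≤ b → b ≤ α → (∫ t in (0:ℝ)..b, S.indicator g t) = 0 := by
    intro b hb0 hbα
    have : (∫ t in (0:ℝ)..b, S.indicator g t) = ∫ _ in (0:ℝ)..b, (0:ℂ) := by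
      apply intervalIntegral.integral_congr_ae
      filter_upwards with t ht
      rw [Set.uIoc_of_le hb0] at ht
      exact Set.indicator_of_notMem
        (fun hts => absurd hts.1 (not_lt.2 (le_trans ht.2 hbα))) g
    simp [this]
  filter_upwards [hmem, hne] with θ hθ hθne
  simp only [hind]
  rcases le_or_gt θ α with h | h
  · have hθS : θ ∉ S := fun hts => absurd hts.1 (not_lt.2 h)
    rw [hzero θ hθ.1 h]
    simp [hθS]
  · have hθ2 : θ < 2 * π := lt_of_le_of_ne hθ.2 hθne
    have hθS : θ ∈ S := by rw [hS]; exact Set.mem_Ioo.mpr ⟨h, hθ2⟩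
    rw [← intervalIntegral.integral_add_adjacent_intervals (hInt 0 α) (hInt α θ),
      hzero α hα0 le_rfl, zero_add]
    have h2 : (∫ t in α..θ, S.indicator g t) = ∫ t in α..θ, g t := by
      apply intervalIntegral.integral_congr_ae
      filter_upwards with t ht
      rw [Set.uIoc_of_le h.le] at ht
      refine Set.indicator_of_mem ?_ g
      rw [hS]
      exact Set.mem_Ioo.mpr ⟨ht.1, lt_of_le_of_lt ht.2 hθ2⟩
    rw [h2]
    have h3 : (∫ t in α..θ, g t)
        = Complex.exp (θ * Complex.I) - Complex.exp (α * Complex.I) := by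
      simp only [hg, mul_comm (Complex.I)]
      rw [intervalIntegral.integral_mul_const]
      have := integral_exp_mul_complex (a := α) (b := θ) (c := Complex.I) Complex.I_ne_zero
      simp only [mul_comm Complex.I] at this
      rw [this]
      exact div_mul_cancel₀ _ Complex.I_ne_zero
    rw [h3]
    simp [hθS]
end
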